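/- arXiv:1903.00229 — 3 statements merged into one kernel-verified Lean document; each statement's English description precedes it below -/
import Mathlib

section
/- Suppose in addition that there exist constants A > 0 and τ > 0 such that for every f ∈ X, every n ∈ ℕ, and every g ∈ G_n, ‖f − P_n(f)‖_X^τ ≤ ‖f − g‖_X^τ − A‖g − P_n(f)‖_X^τ. Then for every f ∈ X and n ∈ ℕ, (Σ_{k=n+1}^∞ 2^{-kατ}‖P_{2^k}(f)‖_Y^τ)^{1/τ} ≤ C·K(f, 2^{-nα}; X, Y), with C independent of f and n. -/
open scoped ENNReal

/-- The Peetre K-functional `K(f,t;X,Y) = inf{‖f−g‖_X + t‖g‖_Y : g ∈ Y}`. -/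
noncomputable def KFunctional {X : Type*} [SeminormedAddCommGroup X]
    (Y : Set X) (NY : X → ℝ) (f : X) (t : ℝ) : ℝ :=
  sInf {r : ℝ | ∃ g ∈ Y, r = ‖f - g‖ + t * NY g}

/-- The error of best approximation `E_n(f)_X = inf{‖f−g‖_X : g ∈ G_n}`. -/
noncomputable def bestApproxError {X : Type*} [SeminormedAddCommGroup X]
    (G : ℕ → Set X) (n : ℕ) (f : X) : ℝ :=
  sInf {r : ℝ | ∃ g ∈ G n, r = ‖f - g‖}

/-- The realization functional `R(f,n^{-α};X,G_n) = inf{‖f−g‖_X + n^{-α}‖g‖_Y : g ∈ G_n}`. -/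
noncomputable def realization {X : Type*} [SeminormedAddCommGroup X]
    (G : ℕ → Set X) (NY : X → ℝ) (α : ℝ) (n : ℕ) (f : X) : ℝ :=
  sInf {r : ℝ | ∃ g ∈ G n, r = ‖f - g‖ + (n : ℝ) ^ (-α) * NY g}


open Finset

private lemma geom_bound {x : ℝ} (h0 : 0 ≤ x) (h1 : x < 1) (N : ℕ) :
    ∑ i ∈ Finset.range N, x ^ i ≤ (1 - x)⁻¹ := by
  have h2 : 0 < 1 - x := by linarith
  rw [geom_sum_eq (ne_of_lt h1)]
  have hxN : 0 ≤ x ^ N := pow_nonneg h0 N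
  rw [show (x ^ N - 1) / (x - 1) = (1 - x ^ N) / (1 - x) by
    rw [← neg_div_neg_eq]; ring_nf]
  rw [show (1 - x)⁻¹ = 1 / (1 - x) from (one_div _).symm]
  gcongr
  linarith

private lemma rpow_two_add_le {τ a b : ℝ} (hτ0 : 0 ≤ τ) (hτ1 : τ ≤ 1)
    (ha : 0 ≤ a) (hb : 0 ≤ b) : (a + b) ^ τ ≤ a ^ τ + b ^ τ := by
  have h := NNReal.rpow_add_le_add_rpow a.toNNReal b.toNNReal hτ0 hτ1
  rw [← Real.toNNReal_add ha hb] at h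
  have h2 := (NNReal.coe_le_coe).2 h
  rw [NNReal.coe_add] at h2
  simpa [NNReal.coe_rpow, Real.coe_toNNReal _ (add_nonneg ha hb),
    Real.coe_toNNReal _ ha, Real.coe_toNNReal _ hb] using h2

private lemma sum_rpow_le {ι : Type*} {τ : ℝ} (hτ0 : 0 < τ) (hτ1 : τ ≤ 1)
    (s : Finset ι) (a : ι → ℝ) (ha : ∀ i ∈ s, 0 ≤ a i) :
    (∑ i ∈ s, a i) ^ τ ≤ ∑ i ∈ s, a i ^ τ := by
  classical
  induction s using Finset.cons_induction with
  | empty => simp [Real.zero_rpow hτ0.ne']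
  | cons i s hi ih =>
    rw [Finset.sum_cons, Finset.sum_cons]
    have h1 : 0 ≤ a i := ha i (Finset.mem_cons_self _ _)
    have h2 : ∀ j ∈ s, 0 ≤ a j := fun j hj => ha j (Finset.mem_cons_of_mem hj)
    have h3 : 0 ≤ ∑ j ∈ s, a j := Finset.sum_nonneg h2
    calc (a i + ∑ j ∈ s, a j) ^ τ
        ≤ a i ^ τ + (∑ j ∈ s, a j) ^ τ := rpow_two_add_le hτ0.le hτ1 h1 h3
      _ ≤ a i ^ τ + ∑ j ∈ s, a j ^ τ := add_le_add_right (ih h2) _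

private lemma jensen_weighted {ι : Type*} (s : Finset ι) (w a : ι → ℝ)
    (hw : ∀ i ∈ s, 0 ≤ w i) (ha : ∀ i ∈ s, 0 ≤ a i) {τ W : ℝ} (hτ : 1 ≤ τ)
    (hW : ∑ i ∈ s, w i ≤ W) :
    (∑ i ∈ s, w i * a i) ^ τ ≤ W ^ (τ - 1) * ∑ i ∈ s, w i * a i ^ τ := by
  have hτ0 : (0:ℝ) < τ := lt_of_lt_of_le one_pos hτ
  set S := ∑ i ∈ s, w i with hS
  have hS0 : 0 ≤ S := Finset.sum_nonneg hw
  have hW0 : 0 ≤ W := le_trans hS0 hW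
  have hsum2 : 0 ≤ ∑ i ∈ s, w i * a i ^ τ :=
    Finset.sum_nonneg fun i hi => mul_nonneg (hw i hi) (Real.rpow_nonneg (ha i hi) τ)
  rcases eq_or_lt_of_le hS0 with h0 | hpos
  · have hz : ∀ i ∈ s, w i = 0 := (Finset.sum_eq_zero_iff_of_nonneg hw).1 h0.symm
    have hz2 : ∑ i ∈ s, w i * a i = 0 :=
      Finset.sum_eq_zero fun i hi => by rw [hz i hi, zero_mul]
    rw [hz2, Real.zero_rpow hτ0.ne']
    exact mul_nonneg (Real.rpow_nonneg hW0 _) hsum2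
  · have key := Real.rpow_arith_mean_le_arith_mean_rpow s (fun i => w i / S) a
      (fun i hi => div_nonneg (hw i hi) hS0)
      (by rw [← Finset.sum_div, ← hS, div_self hpos.ne']) ha hτ
    have e1 : ∑ i ∈ s, w i * a i = S * ∑ i ∈ s, w i / S * a i := by
      rw [Finset.mul_sum]
      exact Finset.sum_congr rfl fun i _ => by field_simp
    have e2 : ∑ i ∈ s, w i / S * a i ^ τ = S⁻¹ * ∑ i ∈ s, w i * a i ^ τ := by
      rw [Finset.mul_sum]
      exact Finset.sum_congr rfl fun i _ => by field_simp
    have hx : 0 ≤ ∑ i ∈ s, w i / S * a i :=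
      Finset.sum_nonneg fun i hi => mul_nonneg (div_nonneg (hw i hi) hS0) (ha i hi)
    calc (∑ i ∈ s, w i * a i) ^ τ
        = S ^ τ * (∑ i ∈ s, w i / S * a i) ^ τ := by
          rw [e1, Real.mul_rpow hS0 hx]
      _ ≤ S ^ τ * (S⁻¹ * ∑ i ∈ s, w i * a i ^ τ) := by
          rw [← e2]
          exact mul_le_mul_of_nonneg_left key (Real.rpow_nonneg hS0 τ)
      _ = S ^ (τ - 1) * ∑ i ∈ s, w i * a i ^ τ := by
          rw [Real.rpow_sub hpos, Real.rpow_one]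
          ring
      _ ≤ W ^ (τ - 1) * ∑ i ∈ s, w i * a i ^ τ :=
          mul_le_mul_of_nonneg_right
            (Real.rpow_le_rpow hS0 hW (by linarith)) hsum2

private lemma npow_rpow_comm {x : ℝ} (hx : 0 ≤ x) (m : ℕ) (p : ℝ) :
    (x ^ m) ^ p = (x ^ p) ^ m := by
  rw [← Real.rpow_natCast x m, ← Real.rpow_mul hx, mul_comm, Real.rpow_mul hx,
    Real.rpow_natCast]

private lemma rpow_add_le_two_rpow {τ a b : ℝ} (hτ : 0 ≤ τ) (ha : 0 ≤ a) (hb : 0 ≤ b) :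
    (a + b) ^ τ ≤ 2 ^ τ * (a ^ τ + b ^ τ) := by
  have h2 : (0:ℝ) ≤ 2 ^ τ := Real.rpow_nonneg (by norm_num) τ
  rcases le_total a b with h | h
  · calc (a + b) ^ τ ≤ (2 * b) ^ τ := Real.rpow_le_rpow (by linarith) (by linarith) hτ
      _ = 2 ^ τ * b ^ τ := Real.mul_rpow (by norm_num) hb
      _ ≤ 2 ^ τ * (a ^ τ + b ^ τ) := by
          have := Real.rpow_nonneg ha τ
          nlinarith
  · calc (a + b) ^ τ ≤ (2 * a) ^ τ := Real.rpow_le_rpow (by linarith) (by linarith) hτ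
      _ = 2 ^ τ * a ^ τ := Real.mul_rpow (by norm_num) ha
      _ ≤ 2 ^ τ * (a ^ τ + b ^ τ) := by
          have := Real.rpow_nonneg hb τ
          nlinarith

private lemma swap_bound {δ : ℝ} (hδ0 : 0 ≤ δ) (hδ1 : δ < 1) (e : ℕ → ℝ)
    (he : ∀ j, 0 ≤ e j) (N : ℕ) :
    ∑ k ∈ Finset.range N, ∑ j ∈ Finset.range (k + 1), δ ^ (k - j) * e j
      ≤ (1 - δ)⁻¹ * ∑ j ∈ Finset.range N, e j := by
  rw [Finset.sum_comm' (t' := Finset.range N) (s' := fun j => Finset.Ico j N)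
    (by intro k j; simp only [Finset.mem_range, Finset.mem_Ico]; omega)]
  rw [Finset.mul_sum]
  apply Finset.sum_le_sum
  intro j _
  rw [← Finset.sum_mul]
  have hgeom : ∑ k ∈ Finset.Ico j N, δ ^ (k - j) ≤ (1 - δ)⁻¹ := by
    rw [Finset.sum_Ico_eq_sum_range]
    calc ∑ i ∈ Finset.range (N - j), δ ^ (j + i - j)
        = ∑ i ∈ Finset.range (N - j), δ ^ i :=
          Finset.sum_congr rfl fun i _ => by rw [Nat.add_sub_cancel_left]
      _ ≤ (1 - δ)⁻¹ := geom_bound hδ0 hδ1 _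
  rw [mul_comm ((1 - δ)⁻¹) (e j)] at *
  exact mul_le_mul_of_nonneg_right hgeom (he j) |>.trans_eq (mul_comm _ _)

private lemma hardy {τ γ : ℝ} (hτ : 0 < τ) (hγ0 : 0 < γ) (hγ1 : γ < 1)
    (d : ℕ → ℝ) (hd : ∀ j, 0 ≤ d j) (N : ℕ) :
    ∑ k ∈ Finset.range N, (∑ j ∈ Finset.range (k + 1), γ ^ (k - j) * d j) ^ τ
      ≤ ((1 - γ)⁻¹ ^ τ * (1 - γ ^ min τ 1)⁻¹) * ∑ j ∈ Finset.range N, d j ^ τ := by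
  have hθ0 : 0 < min τ 1 := lt_min hτ one_pos
  have hθ1 : min τ 1 ≤ 1 := min_le_right _ _
  set δ := γ ^ min τ 1 with hδ_def
  have hδ0 : 0 < δ := Real.rpow_pos_of_pos hγ0 _
  have hδ1 : δ < 1 := Real.rpow_lt_one hγ0.le hγ1 hθ0
  have h01 : 0 < 1 - γ := by linarith
  set W := (1 - γ)⁻¹ with hW_def
  have hW1 : 1 ≤ W := by
    rw [hW_def, show (1 - γ)⁻¹ = 1 / (1 - γ) from (one_div _).symm, le_div_iff₀ h01]
    linarith
  have hW0 : 0 ≤ W := by linarith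
  have hWτ0 : 0 ≤ W ^ τ := Real.rpow_nonneg hW0 τ
  have hpt : ∀ k, (∑ j ∈ Finset.range (k + 1), γ ^ (k - j) * d j) ^ τ
      ≤ W ^ τ * ∑ j ∈ Finset.range (k + 1), δ ^ (k - j) * d j ^ τ := by
    intro k
    have hterm : ∀ j ∈ Finset.range (k + 1), 0 ≤ γ ^ (k - j) * d j :=
      fun j _ => mul_nonneg (pow_nonneg hγ0.le _) (hd j)
    have hsum0 : 0 ≤ ∑ j ∈ Finset.range (k + 1), δ ^ (k - j) * d j ^ τ :=
      Finset.sum_nonneg fun j _ =>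
        mul_nonneg (pow_nonneg hδ0.le _) (Real.rpow_nonneg (hd j) τ)
    rcases le_or_gt τ 1 with hle | hgt
    · have hθτ : min τ 1 = τ := min_eq_left hle
      calc (∑ j ∈ Finset.range (k + 1), γ ^ (k - j) * d j) ^ τ
          ≤ ∑ j ∈ Finset.range (k + 1), (γ ^ (k - j) * d j) ^ τ :=
            sum_rpow_le hτ hle _ _ hterm
        _ = ∑ j ∈ Finset.range (k + 1), δ ^ (k - j) * d j ^ τ :=
            Finset.sum_congr rfl fun j _ => by
              rw [Real.mul_rpow (pow_nonneg hγ0.le _) (hd j),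
                npow_rpow_comm hγ0.le, hδ_def, hθτ]
        _ ≤ W ^ τ * ∑ j ∈ Finset.range (k + 1), δ ^ (k - j) * d j ^ τ := by
            apply le_mul_of_one_le_left hsum0
            calc (1:ℝ) = 1 ^ τ := (Real.one_rpow τ).symm
              _ ≤ W ^ τ := Real.rpow_le_rpow zero_le_one hW1 hτ.le
    · have hθτ : min τ 1 = 1 := min_eq_right hgt.le
      have hδγ : δ = γ := by rw [hδ_def, hθτ, Real.rpow_one]
      have hsw : ∑ j ∈ Finset.range (k + 1), γ ^ (k - j) ≤ W := by
        have hrefl := Finset.sum_range_reflect (fun i => γ ^ i) (k + 1)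
        simp only [Nat.add_sub_cancel] at hrefl
        calc ∑ j ∈ Finset.range (k + 1), γ ^ (k - j)
            = ∑ j ∈ Finset.range (k + 1), γ ^ j := hrefl
          _ ≤ W := geom_bound hγ0.le hγ1 _
      calc (∑ j ∈ Finset.range (k + 1), γ ^ (k - j) * d j) ^ τ
          ≤ W ^ (τ - 1) * ∑ j ∈ Finset.range (k + 1), γ ^ (k - j) * d j ^ τ :=
            jensen_weighted _ _ _ (fun j _ => pow_nonneg hγ0.le _)
              (fun j _ => hd j) hgt.le hsw
        _ ≤ W ^ τ * ∑ j ∈ Finset.range (k + 1), δ ^ (k - j) * d j ^ τ := by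
            rw [hδγ]
            exact mul_le_mul_of_nonneg_right
              (Real.rpow_le_rpow_of_exponent_le hW1 (by linarith))
              (Finset.sum_nonneg fun j _ =>
                mul_nonneg (pow_nonneg hγ0.le _) (Real.rpow_nonneg (hd j) τ))
  calc ∑ k ∈ Finset.range N, (∑ j ∈ Finset.range (k + 1), γ ^ (k - j) * d j) ^ τ
      ≤ ∑ k ∈ Finset.range N,
          W ^ τ * ∑ j ∈ Finset.range (k + 1), δ ^ (k - j) * d j ^ τ :=
        Finset.sum_le_sum fun k _ => hpt k
    _ = W ^ τ * ∑ k ∈ Finset.range N, ∑ j ∈ Finset.range (k + 1), δ ^ (k - j) * d j ^ τ :=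
        (Finset.mul_sum _ _ _).symm
    _ ≤ W ^ τ * ((1 - δ)⁻¹ * ∑ j ∈ Finset.range N, d j ^ τ) :=
        mul_le_mul_of_nonneg_left
          (swap_bound hδ0.le hδ1 (fun j => d j ^ τ) (fun j => Real.rpow_nonneg (hd j) τ) N)
          hWτ0
    _ = (W ^ τ * (1 - δ)⁻¹) * ∑ j ∈ Finset.range N, d j ^ τ := by ring

set_option maxHeartbeats 2000000 in
/-- Lemma (A). Under Jackson, Bernstein, and the realization
assumption, if the best approximants satisfy
`‖f − P_n(f)‖^τ ≤ ‖f−g‖^τ − A‖g − P_n(f)‖^τ` for all `g ∈ G_n`, then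
`(∑_{k=n+1}^∞ 2^{-kατ} ‖P_{2^k}(f)‖_Y^τ)^{1/τ} ≲ K(f, 2^{-nα}; X, Y)`. -/
theorem stmt4 {X : Type*} [NormedAddCommGroup X] [NormedSpace ℝ X]
    (Y : Submodule ℝ X) (NY : X → ℝ)
    (hNY_nonneg : ∀ g : X, 0 ≤ NY g)
    (hNY_add : ∀ g h : X, g ∈ Y → h ∈ Y → NY (g + h) ≤ NY g + NY h)
    (hNY_smul : ∀ (c : ℝ) (g : X), g ∈ Y → NY (c • g) = |c| * NY g)
    (G : ℕ → Set X)
    (hG_zero : (0 : X) ∈ G 1)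
    (hG_mono : ∀ n : ℕ, G n ⊆ G (n + 1))
    (hG_neg : ∀ (n : ℕ) (g : X), g ∈ G n → -g ∈ G n)
    (hG_sub : ∀ n : ℕ, G n ⊆ (Y : Set X))
    (hG_dense : Dense (⋃ n : ℕ, G (n + 1)))
    (α : ℝ) (hα : 0 < α)
    (c₁ c₂ : ℝ) (hc₁ : 0 < c₁) (hc₂ : 0 < c₂)
    (jackson : ∀ f ∈ Y, ∀ n : ℕ, 1 ≤ n →
      bestApproxError G n f ≤ c₁ * (n : ℝ) ^ (-α) * NY f)
    (bernstein : ∀ n : ℕ, 1 ≤ n → ∀ g₁ ∈ G n, ∀ g₂ ∈ G n,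
      NY (g₁ - g₂) ≤ c₂ * (n : ℝ) ^ α * ‖g₁ - g₂‖)
    (C₀ : ℝ) (hC₀ : 0 < C₀)
    (hreal : ∀ (f : X) (n : ℕ), 1 ≤ n →
      realization G NY α n f ≤ C₀ * KFunctional (Y : Set X) NY f ((n : ℝ) ^ (-α)))
    (P : ℕ → X → X)
    (hP : ∀ (f : X) (n : ℕ), 1 ≤ n → P n f ∈ G n ∧ ‖f - P n f‖ = bestApproxError G n f)
    (A τ : ℝ) (hA : 0 < A) (hτ : 0 < τ)
    (hAineq : ∀ (f : X) (n : ℕ), 1 ≤ n → ∀ g ∈ G n,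
      ‖f - P n f‖ ^ τ ≤ ‖f - g‖ ^ τ - A * ‖g - P n f‖ ^ τ) :
    ∃ C : ℝ, 0 < C ∧ ∀ (f : X) (n : ℕ), 1 ≤ n →
      (∑' k : ℕ,
          ENNReal.ofReal
            (((2 : ℝ) ^ (-((n + 1 + k : ℕ) : ℝ) * α) * NY (P (2 ^ (n + 1 + k)) f)) ^ τ)) ^
          (1 / τ)
        ≤ ENNReal.ofReal
            (C * KFunctional (Y : Set X) NY f ((2 : ℝ) ^ (-(n : ℝ) * α))) := by
  have two_pos' : (0:ℝ) < 2 := two_pos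
  have hc : ∀ (m : ℕ) (x : ℝ), ((2 ^ m : ℕ) : ℝ) ^ x = (2 : ℝ) ^ ((m : ℝ) * x) := by
    intro m x
    rw [Nat.cast_pow, Nat.cast_ofNat, ← Real.rpow_natCast (2 : ℝ) m,
      ← Real.rpow_mul (by norm_num)]
  have hnp : ∀ (a : ℝ) (m : ℕ), ((2 : ℝ) ^ a) ^ m = (2 : ℝ) ^ (a * m) := by
    intro a m
    rw [← Real.rpow_natCast ((2:ℝ) ^ a) m, ← Real.rpow_mul (by norm_num : (0:ℝ) ≤ 2)]
  set γ : ℝ := (2 : ℝ) ^ (-α) with hγ_def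
  have hγ0 : 0 < γ := Real.rpow_pos_of_pos two_pos' _
  have hγ1 : γ < 1 := by
    rw [hγ_def]
    exact Real.rpow_lt_one_of_one_lt_of_neg one_lt_two (by linarith)
  have hγτ0 : 0 < γ ^ τ := Real.rpow_pos_of_pos hγ0 τ
  have hγτ1 : γ ^ τ < 1 := Real.rpow_lt_one hγ0.le hγ1 hτ
  have hθ0 : 0 < min τ 1 := lt_min hτ one_pos
  have hγθ1 : γ ^ min τ 1 < 1 := Real.rpow_lt_one hγ0.le hγ1 hθ0
  set E1 : ℝ := (1 - γ ^ τ)⁻¹ with hE1_def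
  have hE10 : 0 < E1 := inv_pos.2 (by linarith)
  set Bh : ℝ := (1 - γ)⁻¹ ^ τ * (1 - γ ^ min τ 1)⁻¹ with hBh_def
  have hBh0 : 0 < Bh :=
    mul_pos (Real.rpow_pos_of_pos (inv_pos.2 (by linarith)) τ) (inv_pos.2 (by linarith))
  have hc₂τ : 0 < c₂ ^ τ := Real.rpow_pos_of_pos hc₂ τ
  have h2τ : (0:ℝ) < 2 ^ τ := Real.rpow_pos_of_pos two_pos' τ
  set B : ℝ := 2 ^ τ * (E1 + c₂ ^ τ * Bh * A⁻¹) with hB_def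
  have hB0 : 0 < B :=
    mul_pos h2τ (add_pos hE10 (mul_pos (mul_pos hc₂τ hBh0) (inv_pos.2 hA)))
  refine ⟨B ^ (1/τ) * C₀, mul_pos (Real.rpow_pos_of_pos hB0 _) hC₀, ?_⟩
  intro f n hn
  set C : ℝ := B ^ (1/τ) * C₀ with hC_def
  have hCpos : 0 < C := mul_pos (Real.rpow_pos_of_pos hB0 _) hC₀
  set t : ℝ := (2 : ℝ) ^ (-(n : ℝ) * α) with ht_def
  have ht0 : 0 < t := Real.rpow_pos_of_pos two_pos' _
  set Kv : ℝ := KFunctional (Y : Set X) NY f t with hKv_def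
  have hKv0 : 0 ≤ Kv := by
    rw [hKv_def]
    unfold KFunctional
    apply Real.sInf_nonneg
    rintro x ⟨g, hgY', rfl⟩
    exact add_nonneg (norm_nonneg _) (mul_nonneg ht0.le (hNY_nonneg g))
  have hCK0 : 0 ≤ C * Kv := mul_nonneg hCpos.le hKv0
  set u : ℕ → ℝ :=
    fun j => (2 : ℝ) ^ (-((n + j : ℕ) : ℝ) * α) * NY (P (2 ^ (n + j)) f) with hu_def
  have hu0 : ∀ j, 0 ≤ u j := by
    intro j
    rw [hu_def]
    exact mul_nonneg (Real.rpow_nonneg two_pos'.le _) (hNY_nonneg _)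
  have hGm : ∀ a b : ℕ, a ≤ b → G a ⊆ G b := by
    intro a b hab
    induction b, hab using Nat.le_induction with
    | base => exact subset_rfl
    | succ b hb ih => exact ih.trans (hG_mono b)
  have hq : ∀ j : ℕ, P (2 ^ (n + j)) f ∈ G (2 ^ (n + j)) :=
    fun j => (hP f _ Nat.one_le_two_pow).1
  -- the main finite-sum estimate
  have main : ∀ ε : ℝ, 0 < ε → ∀ N : ℕ,
      ∑ k ∈ Finset.range N, u (k + 1) ^ τ ≤ B * (C₀ * Kv + ε) ^ τ := by
    intro ε hε N
    set r : ℝ := C₀ * Kv + ε with hr_def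
    have hr0 : 0 < r := by nlinarith
    have hct : ((2 ^ n : ℕ) : ℝ) ^ (-α) = t := by
      rw [hc n (-α), ht_def]
      congr 1
      ring
    have hR := hreal f (2 ^ n) Nat.one_le_two_pow
    rw [hct] at hR
    have hlt : realization G NY α (2 ^ n) f < r := by
      rw [hr_def]
      calc realization G NY α (2 ^ n) f ≤ C₀ * Kv := hR
        _ < C₀ * Kv + ε := by linarith
    have h0G : (0 : X) ∈ G (2 ^ n) := hGm 1 (2 ^ n) Nat.one_le_two_pow hG_zero
    unfold realization at hlt
    have hne : {r' : ℝ | ∃ g ∈ G (2 ^ n),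
        r' = ‖f - g‖ + ((2 ^ n : ℕ) : ℝ) ^ (-α) * NY g}.Nonempty :=
      ⟨_, ⟨0, h0G, rfl⟩⟩
    obtain ⟨x, hxmem, hxlt⟩ := exists_lt_of_csInf_lt hne hlt
    obtain ⟨g, hgG, rfl⟩ := hxmem
    rw [hct] at hxlt
    have hgY : g ∈ Y := hG_sub _ hgG
    have hNYg0 : 0 ≤ NY g := hNY_nonneg g
    have hgr : ‖f - g‖ + t * NY g ≤ r := hxlt.le
    have hfgr : ‖f - g‖ ≤ r := by nlinarith [mul_nonneg ht0.le hNYg0]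
    have htNYg : t * NY g ≤ r := by nlinarith [norm_nonneg (f - g)]
    set d : ℕ → ℝ := fun j => Nat.casesOn j ‖P (2 ^ n) f - g‖
      (fun i => ‖P (2 ^ (n + i + 1)) f - P (2 ^ (n + i)) f‖) with hd_def
    have hd0 : ∀ j, 0 ≤ d j := by
      intro j
      rw [hd_def]
      cases j <;> exact norm_nonneg _
    have hd00 : d 0 = ‖P (2 ^ n) f - g‖ := rfl
    have hdS : ∀ M : ℕ, d (M + 1) = ‖P (2 ^ (n + M + 1)) f - P (2 ^ (n + M)) f‖ :=
      fun M => rfl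
    -- telescoping
    have tel : ∀ M : ℕ,
        ∑ j ∈ Finset.range (M + 1), A * d j ^ τ + ‖f - P (2 ^ (n + M)) f‖ ^ τ
          ≤ ‖f - g‖ ^ τ := by
      intro M
      induction M with
      | zero =>
        simp only [Nat.add_zero]
        rw [Finset.sum_range_one, hd00, norm_sub_rev]
        have h := hAineq f (2 ^ n) Nat.one_le_two_pow g hgG
        linarith
      | succ M ih =>
        show ∑ j ∈ Finset.range (M + 1 + 1), A * d j ^ τ
            + ‖f - P (2 ^ (n + M + 1)) f‖ ^ τ ≤ ‖f - g‖ ^ τ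
        rw [Finset.sum_range_succ, hdS M, norm_sub_rev]
        have h := hAineq f (2 ^ (n + M + 1)) Nat.one_le_two_pow (P (2 ^ (n + M)) f)
          (hGm (2 ^ (n + M)) (2 ^ (n + M + 1))
            (Nat.pow_le_pow_right (by norm_num) (by omega)) (hq M))
        linarith
    have hrτ : ‖f - g‖ ^ τ ≤ r ^ τ := Real.rpow_le_rpow (norm_nonneg _) hfgr hτ.le
    have hsumd : ∀ M : ℕ, ∑ j ∈ Finset.range (M + 1), d j ^ τ ≤ A⁻¹ * r ^ τ := by
      intro M
      have h := tel M
      rw [← Finset.mul_sum] at h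
      have h2 : 0 ≤ ‖f - P (2 ^ (n + M)) f‖ ^ τ := Real.rpow_nonneg (norm_nonneg _) τ
      calc ∑ j ∈ Finset.range (M + 1), d j ^ τ ≤ r ^ τ / A := by
            rw [le_div_iff₀ hA]
            nlinarith
        _ = A⁻¹ * r ^ τ := by ring
    -- Bernstein chain
    have hNYq : ∀ k : ℕ, NY (P (2 ^ (n + k)) f) ≤ NY g +
        ∑ j ∈ Finset.range (k + 1), c₂ * (2 : ℝ) ^ (((n + j : ℕ) : ℝ) * α) * d j := by
      intro k
      induction k with
      | zero =>
        rw [Finset.sum_range_one]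
        simp only [Nat.add_zero]
        rw [hd00]
        have hsub : P (2 ^ n) f - g ∈ Y := Submodule.sub_mem Y (hG_sub _ (hq 0)) hgY
        have htri : NY (P (2 ^ n) f) ≤ NY (P (2 ^ n) f - g) + NY g := by
          have h := hNY_add (P (2 ^ n) f - g) g hsub hgY
          rwa [sub_add_cancel] at h
        have hb := bernstein (2 ^ n) Nat.one_le_two_pow (P (2 ^ n) f) (hq 0) g hgG
        rw [hc] at hb
        linarith
      | succ k ih =>
        rw [Finset.sum_range_succ]
        simp only [← Nat.add_assoc]
        rw [hdS k]
        have hmem1 : P (2 ^ (n + k + 1)) f ∈ G (2 ^ (n + k + 1)) := hq (k + 1)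
        have hmem2 : P (2 ^ (n + k)) f ∈ G (2 ^ (n + k + 1)) :=
          hGm (2 ^ (n + k)) (2 ^ (n + k + 1))
            (Nat.pow_le_pow_right (by norm_num) (by omega)) (hq k)
        have hsub : P (2 ^ (n + k + 1)) f - P (2 ^ (n + k)) f ∈ Y :=
          Submodule.sub_mem Y (hG_sub _ hmem1) (hG_sub _ hmem2)
        have htri : NY (P (2 ^ (n + k + 1)) f)
            ≤ NY (P (2 ^ (n + k + 1)) f - P (2 ^ (n + k)) f) + NY (P (2 ^ (n + k)) f) := by
          have h := hNY_add (P (2 ^ (n + k + 1)) f - P (2 ^ (n + k)) f)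
            (P (2 ^ (n + k)) f) hsub (hG_sub _ (hq k))
          rwa [sub_add_cancel] at h
        have hb := bernstein (2 ^ (n + k + 1)) Nat.one_le_two_pow
          (P (2 ^ (n + k + 1)) f) hmem1 (P (2 ^ (n + k)) f) hmem2
        rw [hc] at hb
        have ih' := ih
        linarith
    -- pointwise key bound
    have hkey : ∀ k : ℕ, u k ≤ γ ^ k * r
        + c₂ * ∑ j ∈ Finset.range (k + 1), γ ^ (k - j) * d j := by
      intro k
      have h1 := hNYq k
      have hck : (2 : ℝ) ^ (-((n + k : ℕ) : ℝ) * α) = γ ^ k * t := by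
        rw [hγ_def, ht_def, hnp (-α) k, ← Real.rpow_add two_pos']
        congr 1
        push_cast
        ring
      have hck0 : 0 ≤ (2 : ℝ) ^ (-((n + k : ℕ) : ℝ) * α) := Real.rpow_nonneg two_pos'.le _
      have h2 : u k ≤ (2 : ℝ) ^ (-((n + k : ℕ) : ℝ) * α) * (NY g +
          ∑ j ∈ Finset.range (k + 1), c₂ * (2 : ℝ) ^ (((n + j : ℕ) : ℝ) * α) * d j) := by
        rw [hu_def]
        exact mul_le_mul_of_nonneg_left h1 hck0
      refine h2.trans ?_
      rw [mul_add, Finset.mul_sum]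
      apply add_le_add
      · rw [hck, mul_assoc]
        exact mul_le_mul_of_nonneg_left htNYg (pow_nonneg hγ0.le k)
      · rw [Finset.mul_sum]
        apply le_of_eq
        apply Finset.sum_congr rfl
        intro j hj
        have hjk : j ≤ k := by
          have := Finset.mem_range.1 hj
          omega
        have hpe : (2 : ℝ) ^ (-((n + k : ℕ) : ℝ) * α) * (2 : ℝ) ^ (((n + j : ℕ) : ℝ) * α)
            = γ ^ (k - j) := by
          rw [hγ_def, hnp (-α) (k - j), ← Real.rpow_add two_pos']
          congr 1
          rw [Nat.cast_sub hjk]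
          push_cast
          ring
        calc (2 : ℝ) ^ (-((n + k : ℕ) : ℝ) * α)
              * (c₂ * (2 : ℝ) ^ (((n + j : ℕ) : ℝ) * α) * d j)
            = c₂ * (((2 : ℝ) ^ (-((n + k : ℕ) : ℝ) * α)
                * (2 : ℝ) ^ (((n + j : ℕ) : ℝ) * α)) * d j) := by ring
          _ = c₂ * (γ ^ (k - j) * d j) := by rw [hpe]
    -- assembling
    have hv0 : ∀ k : ℕ, 0 ≤ ∑ j ∈ Finset.range (k + 1), γ ^ (k - j) * d j :=
      fun k => Finset.sum_nonneg fun j _ => mul_nonneg (pow_nonneg hγ0.le _) (hd0 j)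
    have hstep : ∀ k : ℕ, u k ^ τ ≤ 2 ^ τ * ((γ ^ τ) ^ k * r ^ τ
        + c₂ ^ τ * (∑ j ∈ Finset.range (k + 1), γ ^ (k - j) * d j) ^ τ) := by
      intro k
      have h1 : u k ^ τ ≤ (γ ^ k * r + c₂ * ∑ j ∈ Finset.range (k + 1), γ ^ (k - j) * d j) ^ τ :=
        Real.rpow_le_rpow (hu0 k) (hkey k) hτ.le
      have h2 := rpow_add_le_two_rpow hτ.le
        (mul_nonneg (pow_nonneg hγ0.le k) hr0.le) (mul_nonneg hc₂.le (hv0 k))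
      have h3 : (γ ^ k * r) ^ τ = (γ ^ τ) ^ k * r ^ τ := by
        rw [Real.mul_rpow (pow_nonneg hγ0.le k) hr0.le, npow_rpow_comm hγ0.le]
      have h4 : (c₂ * ∑ j ∈ Finset.range (k + 1), γ ^ (k - j) * d j) ^ τ
          = c₂ ^ τ * (∑ j ∈ Finset.range (k + 1), γ ^ (k - j) * d j) ^ τ :=
        Real.mul_rpow hc₂.le (hv0 k)
      calc u k ^ τ ≤ (γ ^ k * r + c₂ * ∑ j ∈ Finset.range (k + 1), γ ^ (k - j) * d j) ^ τ := h1
        _ ≤ 2 ^ τ * ((γ ^ k * r) ^ τ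
            + (c₂ * ∑ j ∈ Finset.range (k + 1), γ ^ (k - j) * d j) ^ τ) := h2
        _ = 2 ^ τ * ((γ ^ τ) ^ k * r ^ τ
            + c₂ ^ τ * (∑ j ∈ Finset.range (k + 1), γ ^ (k - j) * d j) ^ τ) := by rw [h3, h4]
    have hfin : ∑ k ∈ Finset.range (N + 1), u k ^ τ ≤ B * r ^ τ := by
      have hgeo : ∑ k ∈ Finset.range (N + 1), (γ ^ τ) ^ k ≤ E1 := by
        rw [hE1_def]
        exact geom_bound hγτ0.le hγτ1 _
      have hhar := hardy hτ hγ0 hγ1 d hd0 (N + 1)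
      rw [← hBh_def] at hhar
      calc ∑ k ∈ Finset.range (N + 1), u k ^ τ
          ≤ ∑ k ∈ Finset.range (N + 1), 2 ^ τ * ((γ ^ τ) ^ k * r ^ τ
            + c₂ ^ τ * (∑ j ∈ Finset.range (k + 1), γ ^ (k - j) * d j) ^ τ) :=
            Finset.sum_le_sum fun k _ => hstep k
        _ = 2 ^ τ * ((∑ k ∈ Finset.range (N + 1), (γ ^ τ) ^ k) * r ^ τ
            + c₂ ^ τ * ∑ k ∈ Finset.range (N + 1),
              (∑ j ∈ Finset.range (k + 1), γ ^ (k - j) * d j) ^ τ) := by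
            rw [← Finset.mul_sum, Finset.sum_add_distrib, ← Finset.sum_mul, ← Finset.mul_sum]
        _ ≤ 2 ^ τ * (E1 * r ^ τ + c₂ ^ τ * (Bh * (A⁻¹ * r ^ τ))) := by
            apply mul_le_mul_of_nonneg_left _ h2τ.le
            apply add_le_add
            · exact mul_le_mul_of_nonneg_right hgeo (Real.rpow_nonneg hr0.le τ)
            · apply mul_le_mul_of_nonneg_left _ hc₂τ.le
              calc ∑ k ∈ Finset.range (N + 1),
                    (∑ j ∈ Finset.range (k + 1), γ ^ (k - j) * d j) ^ τ
                  ≤ Bh * ∑ j ∈ Finset.range (N + 1), d j ^ τ := hhar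
                _ ≤ Bh * (A⁻¹ * r ^ τ) := mul_le_mul_of_nonneg_left (hsumd N) hBh0.le
        _ = B * r ^ τ := by rw [hB_def]; ring
    calc ∑ k ∈ Finset.range N, u (k + 1) ^ τ ≤ ∑ k ∈ Finset.range (N + 1), u k ^ τ := by
          rw [Finset.sum_range_succ']
          exact le_add_of_nonneg_right (Real.rpow_nonneg (hu0 0) τ)
      _ ≤ B * r ^ τ := hfin
  -- limit ε → 0
  have hBCK : (C * Kv) ^ τ = B * (C₀ * Kv) ^ τ := by
    rw [show C * Kv = B ^ (1/τ) * (C₀ * Kv) from by rw [hC_def]; ring,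
      Real.mul_rpow (Real.rpow_nonneg hB0.le _) (mul_nonneg hC₀.le hKv0),
      ← Real.rpow_mul hB0.le, one_div_mul_cancel hτ.ne', Real.rpow_one]
  have main2 : ∀ N : ℕ, ∑ k ∈ Finset.range N, u (k + 1) ^ τ ≤ (C * Kv) ^ τ := by
    intro N
    rw [hBCK]
    have hcont : ContinuousAt (fun ε : ℝ => B * (C₀ * Kv + ε) ^ τ) 0 := by
      apply ContinuousAt.mul continuousAt_const
      exact (ContinuousAt.add continuousAt_const continuousAt_id).rpow_const (Or.inr hτ.le)
    have htend : Filter.Tendsto (fun ε : ℝ => B * (C₀ * Kv + ε) ^ τ)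
        (nhdsWithin 0 (Set.Ioi 0)) (nhds (B * (C₀ * Kv) ^ τ)) := by
      have h := hcont.tendsto
      simp only [add_zero] at h
      exact h.mono_left nhdsWithin_le_nhds
    exact ge_of_tendsto htend (eventually_nhdsWithin_of_forall fun ε hε => main ε hε N)
  -- pass to ENNReal
  have hv : ∀ k : ℕ, ((2 : ℝ) ^ (-((n + 1 + k : ℕ) : ℝ) * α) * NY (P (2 ^ (n + 1 + k)) f))
      = u (k + 1) := by
    intro k
    simp only [hu_def]
    rw [show n + (k + 1) = n + 1 + k from by omega]
  simp only [hv]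
  have hsle : ∀ s : Finset ℕ,
      ∑ k ∈ s, ENNReal.ofReal (u (k + 1) ^ τ) ≤ ENNReal.ofReal ((C * Kv) ^ τ) := by
    intro s
    obtain ⟨N, hN⟩ := s.exists_nat_subset_range
    rw [← ENNReal.ofReal_sum_of_nonneg (fun i _ => Real.rpow_nonneg (hu0 _) τ)]
    apply ENNReal.ofReal_le_ofReal
    calc ∑ k ∈ s, u (k + 1) ^ τ
        ≤ ∑ k ∈ Finset.range N, u (k + 1) ^ τ :=
          Finset.sum_le_sum_of_subset_of_nonneg hN fun i _ _ => Real.rpow_nonneg (hu0 _) τ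
      _ ≤ (C * Kv) ^ τ := main2 N
  have htsum : ∑' k : ℕ, ENNReal.ofReal (u (k + 1) ^ τ) ≤ ENNReal.ofReal ((C * Kv) ^ τ) := by
    rw [ENNReal.tsum_eq_iSup_sum]
    exact iSup_le hsle
  calc (∑' k : ℕ, ENNReal.ofReal (u (k + 1) ^ τ)) ^ (1/τ)
      ≤ (ENNReal.ofReal ((C * Kv) ^ τ)) ^ (1/τ) :=
        ENNReal.rpow_le_rpow htsum (one_div_nonneg.2 hτ.le)
    _ = ENNReal.ofReal (((C * Kv) ^ τ) ^ (1/τ)) :=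
        ENNReal.ofReal_rpow_of_nonneg (Real.rpow_nonneg hCK0 τ) (one_div_nonneg.2 hτ.le)
    _ = ENNReal.ofReal (C * Kv) := by
        rw [← Real.rpow_mul hCK0, mul_one_div_cancel hτ.ne', Real.rpow_one]
end

section
/- Suppose in addition that there exist constants B > 0 and θ > 0 such that for every f ∈ X, every n ∈ ℕ, and every g ∈ G_n, ‖f − g‖_X^θ ≤ ‖f − P_n(f)‖_X^θ + B‖g − P_n(f)‖_X^θ. Then for every f ∈ X and n ∈ ℕ, K(f, 2^{-nα}; X, Y) ≤ C·(Σ_{k=n+1}^∞ 2^{-kαθ}‖P_{2^k}(f)‖_Y^θ)^{1/θ}, with C independent of f and n. -/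
open scoped ENNReal

/-- Lemma (B). Under Jackson, Bernstein, and the realization
assumption, if the best approximants satisfy
`‖f − g‖^θ ≤ ‖f − P_n(f)‖^θ + B‖g − P_n(f)‖^θ` for all `g ∈ G_n`, then
`K(f, 2^{-nα}; X, Y) ≲ (∑_{k=n+1}^∞ 2^{-kαθ} ‖P_{2^k}(f)‖_Y^θ)^{1/θ}`. -/
theorem stmt5 {X : Type*} [NormedAddCommGroup X] [NormedSpace ℝ X]
    (Y : Submodule ℝ X) (NY : X → ℝ)
    (hNY_nonneg : ∀ g : X, 0 ≤ NY g)
    (hNY_add : ∀ g h : X, g ∈ Y → h ∈ Y → NY (g + h) ≤ NY g + NY h)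
    (hNY_smul : ∀ (c : ℝ) (g : X), g ∈ Y → NY (c • g) = |c| * NY g)
    (G : ℕ → Set X)
    (hG_zero : (0 : X) ∈ G 1)
    (hG_mono : ∀ n : ℕ, G n ⊆ G (n + 1))
    (hG_neg : ∀ (n : ℕ) (g : X), g ∈ G n → -g ∈ G n)
    (hG_sub : ∀ n : ℕ, G n ⊆ (Y : Set X))
    (hG_dense : Dense (⋃ n : ℕ, G (n + 1)))
    (α : ℝ) (hα : 0 < α)
    (c₁ c₂ : ℝ) (hc₁ : 0 < c₁) (hc₂ : 0 < c₂)
    (jackson : ∀ f ∈ Y, ∀ n : ℕ, 1 ≤ n →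
      bestApproxError G n f ≤ c₁ * (n : ℝ) ^ (-α) * NY f)
    (bernstein : ∀ n : ℕ, 1 ≤ n → ∀ g₁ ∈ G n, ∀ g₂ ∈ G n,
      NY (g₁ - g₂) ≤ c₂ * (n : ℝ) ^ α * ‖g₁ - g₂‖)
    (C₀ : ℝ) (hC₀ : 0 < C₀)
    (hreal : ∀ (f : X) (n : ℕ), 1 ≤ n →
      realization G NY α n f ≤ C₀ * KFunctional (Y : Set X) NY f ((n : ℝ) ^ (-α)))
    (P : ℕ → X → X)
    (hP : ∀ (f : X) (n : ℕ), 1 ≤ n → P n f ∈ G n ∧ ‖f - P n f‖ = bestApproxError G n f)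
    (B θ : ℝ) (hB : 0 < B) (hθ : 0 < θ)
    (hBineq : ∀ (f : X) (n : ℕ), 1 ≤ n → ∀ g ∈ G n,
      ‖f - g‖ ^ θ ≤ ‖f - P n f‖ ^ θ + B * ‖g - P n f‖ ^ θ) :
    ∃ C : ℝ, 0 < C ∧ ∀ (f : X) (n : ℕ), 1 ≤ n →
      ENNReal.ofReal (KFunctional (Y : Set X) NY f ((2 : ℝ) ^ (-(n : ℝ) * α)))
        ≤ ENNReal.ofReal C *
          (∑' k : ℕ,
            ENNReal.ofReal
              (((2 : ℝ) ^ (-((n + 1 + k : ℕ) : ℝ) * α) * NY (P (2 ^ (n + 1 + k)) f)) ^ θ)) ^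
            (1 / θ) := by

  classical
  -- monotonicity of the G's
  have hG_mono' : ∀ {a b : ℕ}, a ≤ b → G a ⊆ G b := by
    intro a b hab
    induction hab with
    | refl => exact subset_rfl
    | step _ ih => exact fun x hx => hG_mono _ (ih hx)
  have hbddE : ∀ (m : ℕ) (f' : X), BddBelow {r : ℝ | ∃ g ∈ G m, r = ‖f' - g‖} := by
    intro m f'
    exact ⟨0, by rintro r ⟨g, -, rfl⟩; exact norm_nonneg _⟩
  have hE_le : ∀ (m : ℕ) (f' : X), ∀ g ∈ G m, bestApproxError G m f' ≤ ‖f' - g‖ := by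
    intro m f' g hg
    exact csInf_le (hbddE m f') ⟨g, hg, rfl⟩
  -- the constant
  set D : ℝ := B * c₁ ^ θ * (2 : ℝ) ^ (α * θ) with hD_def
  have hD_pos : 0 < D := by
    apply mul_pos (mul_pos hB _) (Real.rpow_pos_of_pos two_pos _)
    exact Real.rpow_pos_of_pos hc₁ _
  refine ⟨D ^ (1 / θ) + (2 : ℝ) ^ α, by positivity, ?_⟩
  intro f n hn
  set e : ℕ → ℝ := fun m => ‖f - P (2 ^ m) f‖ with he_def
  set t : ℕ → ℝ :=
    fun k => ((2 : ℝ) ^ (-((n + 1 + k : ℕ) : ℝ) * α) * NY (P (2 ^ (n + 1 + k)) f)) ^ θ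
    with ht_def
  have ht_nonneg : ∀ k, 0 ≤ t k := by
    intro k
    exact Real.rpow_nonneg
      (mul_nonneg (Real.rpow_nonneg two_pos.le _) (hNY_nonneg _)) _
  show ENNReal.ofReal (KFunctional (Y : Set X) NY f ((2 : ℝ) ^ (-(n : ℝ) * α)))
        ≤ ENNReal.ofReal (D ^ (1 / θ) + (2 : ℝ) ^ α) *
          (∑' k : ℕ, ENNReal.ofReal (t k)) ^ (1 / θ)
  by_cases hS : (∑' k : ℕ, ENNReal.ofReal (t k)) = ⊤
  · rw [hS, ENNReal.top_rpow_of_pos (by positivity : (0:ℝ) < 1 / θ), ENNReal.mul_top]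
    · exact le_top
    · simp only [ne_eq, ENNReal.ofReal_eq_zero, not_le]
      positivity
  -- real-valued work
  have hsum : Summable t := by
    have h1 := ENNReal.summable_toReal hS
    exact h1.congr fun k => ENNReal.toReal_ofReal (ht_nonneg k)
  set T : ℝ := ∑' k, t k with hT_def
  have hT_nonneg : 0 ≤ T := tsum_nonneg ht_nonneg
  have hS_eq : (∑' k : ℕ, ENNReal.ofReal (t k)) = ENNReal.ofReal T :=
    (ENNReal.ofReal_tsum_of_nonneg ht_nonneg hsum).symm
  -- convenient facts about powers of two
  have hcast : ∀ m : ℕ, ((2 ^ m : ℕ) : ℝ) ^ (-α) = (2 : ℝ) ^ (-(m : ℝ) * α) := by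
    intro m
    have h1 : ((2 ^ m : ℕ) : ℝ) = (2 : ℝ) ^ (m : ℝ) := by
      rw [Real.rpow_natCast]; push_cast; ring
    rw [h1, ← Real.rpow_mul two_pos.le, show (m : ℝ) * -α = -(m : ℝ) * α by ring]
  -- Step A1 : one step of the telescoping inequality
  have hA1 : ∀ m : ℕ, e m ^ θ ≤ e (m + 1) ^ θ +
      B * (c₁ * ((2 ^ m : ℕ) : ℝ) ^ (-α) * NY (P (2 ^ (m + 1)) f)) ^ θ := by
    intro m
    set F : X := P (2 ^ (m + 1)) f with hF_def
    have hF_mem : F ∈ G (2 ^ (m + 1)) := (hP f _ Nat.one_le_two_pow).1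
    have hF_Y : F ∈ Y := hG_sub _ hF_mem
    set q : X := P (2 ^ m) F with hq_def
    have hq_mem : q ∈ G (2 ^ m) := (hP F _ Nat.one_le_two_pow).1
    have hq_mem' : q ∈ G (2 ^ (m + 1)) :=
      hG_mono' (Nat.pow_le_pow_right (by norm_num) (Nat.le_succ m)) hq_mem
    have h1 := hBineq f (2 ^ (m + 1)) Nat.one_le_two_pow q hq_mem'
    have h2 : e m ≤ ‖f - q‖ := by
      have := (hP f (2 ^ m) Nat.one_le_two_pow).2
      calc e m = bestApproxError G (2 ^ m) f := this
        _ ≤ ‖f - q‖ := hE_le _ _ q hq_mem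
    have h3 : ‖q - F‖ ≤ c₁ * ((2 ^ m : ℕ) : ℝ) ^ (-α) * NY F := by
      rw [norm_sub_rev]
      calc ‖F - q‖ = bestApproxError G (2 ^ m) F := (hP F _ Nat.one_le_two_pow).2
        _ ≤ c₁ * ((2 ^ m : ℕ) : ℝ) ^ (-α) * NY F := jackson F hF_Y _ Nat.one_le_two_pow
    have h4 : e m ^ θ ≤ ‖f - q‖ ^ θ := Real.rpow_le_rpow (norm_nonneg _) h2 hθ.le
    have h5 : ‖q - F‖ ^ θ ≤ (c₁ * ((2 ^ m : ℕ) : ℝ) ^ (-α) * NY F) ^ θ :=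
      Real.rpow_le_rpow (norm_nonneg _) h3 hθ.le
    calc e m ^ θ ≤ ‖f - q‖ ^ θ := h4
      _ ≤ ‖f - F‖ ^ θ + B * ‖q - F‖ ^ θ := h1
      _ ≤ e (m + 1) ^ θ + B * (c₁ * ((2 ^ m : ℕ) : ℝ) ^ (-α) * NY F) ^ θ := by
          have : ‖f - F‖ ^ θ = e (m + 1) ^ θ := rfl
          rw [this]
          exact add_le_add_right (mul_le_mul_of_nonneg_left h5 hB.le) _
  -- each telescoping increment equals D * t (i+1)
  have hterm : ∀ i : ℕ,
      B * (c₁ * ((2 ^ (n + 1 + i) : ℕ) : ℝ) ^ (-α) * NY (P (2 ^ (n + 1 + i + 1)) f)) ^ θ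
        = D * t (i + 1) := by
    intro i
    have hidx : n + 1 + (i + 1) = n + 1 + i + 1 := by ring
    have hNt : t (i + 1) =
        ((2 : ℝ) ^ (-((n + 1 + i + 1 : ℕ) : ℝ) * α) * NY (P (2 ^ (n + 1 + i + 1)) f)) ^ θ := by
      rw [ht_def]; simp only [hidx]
    rw [hNt, hcast]
    have hsplit : (2 : ℝ) ^ (-((n + 1 + i : ℕ) : ℝ) * α)
        = (2 : ℝ) ^ α * (2 : ℝ) ^ (-((n + 1 + i + 1 : ℕ) : ℝ) * α) := by
      rw [← Real.rpow_add two_pos]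
      congr 1
      push_cast; ring
    rw [hsplit]
    set x : ℝ := (2 : ℝ) ^ (-((n + 1 + i + 1 : ℕ) : ℝ) * α) * NY (P (2 ^ (n + 1 + i + 1)) f)
      with hx_def
    have hx_nonneg : 0 ≤ x := mul_nonneg (Real.rpow_nonneg two_pos.le _) (hNY_nonneg _)
    have harr : c₁ * ((2 : ℝ) ^ α * (2 : ℝ) ^ (-((n + 1 + i + 1 : ℕ) : ℝ) * α)) *
        NY (P (2 ^ (n + 1 + i + 1)) f) = (c₁ * (2 : ℝ) ^ α) * x := by
      rw [hx_def]; ring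
    rw [harr, Real.mul_rpow (by positivity) hx_nonneg,
      Real.mul_rpow hc₁.le (Real.rpow_nonneg two_pos.le _),
      ← Real.rpow_mul two_pos.le]
    rw [hD_def]; ring
  -- telescoping
  have hTel : ∀ M : ℕ, e (n + 1) ^ θ ≤ e (n + 1 + M) ^ θ +
      ∑ i ∈ Finset.range M, D * t (i + 1) := by
    intro M
    induction M with
    | zero => simp
    | succ M ih =>
      have hstep := hA1 (n + 1 + M)
      calc e (n + 1) ^ θ
          ≤ e (n + 1 + M) ^ θ + ∑ i ∈ Finset.range M,
              B * (c₁ * ((2 ^ (n + 1 + i) : ℕ) : ℝ) ^ (-α) *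
                NY (P (2 ^ (n + 1 + i + 1)) f)) ^ θ := by
            refine le_trans ih ?_
            apply add_le_add_right
            apply le_of_eq
            exact Finset.sum_congr rfl fun i _ => (hterm i).symm
        _ ≤ (e (n + 1 + M + 1) ^ θ +
              B * (c₁ * ((2 ^ (n + 1 + M) : ℕ) : ℝ) ^ (-α) *
                NY (P (2 ^ (n + 1 + M + 1)) f)) ^ θ) +
            ∑ i ∈ Finset.range M,
              B * (c₁ * ((2 ^ (n + 1 + i) : ℕ) : ℝ) ^ (-α) *
                NY (P (2 ^ (n + 1 + i + 1)) f)) ^ θ := by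
            exact add_le_add_left hstep _
        _ = e (n + 1 + (M + 1)) ^ θ + ∑ i ∈ Finset.range (M + 1),
              B * (c₁ * ((2 ^ (n + 1 + i) : ℕ) : ℝ) ^ (-α) *
                NY (P (2 ^ (n + 1 + i + 1)) f)) ^ θ := by
            rw [Finset.sum_range_succ]
            have : n + 1 + (M + 1) = n + 1 + M + 1 := by ring
            rw [this]; ring
        _ = e (n + 1 + (M + 1)) ^ θ + ∑ i ∈ Finset.range (M + 1), D * t (i + 1) := by
            congr 1
            exact Finset.sum_congr rfl fun i _ => hterm i
  -- the partial sums are bounded by D * T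
  have hPartial : ∀ M : ℕ, ∑ i ∈ Finset.range M, D * t (i + 1) ≤ D * T := by
    intro M
    rw [← Finset.mul_sum]
    apply mul_le_mul_of_nonneg_left _ hD_pos.le
    have h1 : ∑ i ∈ Finset.range M, t (i + 1) ≤ ∑ i ∈ Finset.range (M + 1), t i := by
      rw [Finset.sum_range_succ']
      exact le_add_of_nonneg_right (ht_nonneg 0)
    exact h1.trans (hsum.sum_le_tsum _ (fun i _ => ht_nonneg i))
  -- the errors tend to zero, by density
  have hdense : ∀ ε : ℝ, 0 < ε → ∃ M : ℕ, e (n + 1 + M) < ε := by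
    intro ε hε
    have hf : f ∈ closure (⋃ m : ℕ, G (m + 1)) := hG_dense f
    rw [Metric.mem_closure_iff] at hf
    obtain ⟨g, hg_mem, hg_dist⟩ := hf ε hε
    rw [Set.mem_iUnion] at hg_mem
    obtain ⟨j, hgj⟩ := hg_mem
    refine ⟨j + 1, ?_⟩
    have hsub : G (j + 1) ⊆ G (2 ^ (n + 1 + (j + 1))) := by
      apply hG_mono'
      calc j + 1 ≤ 2 ^ j := Nat.lt_two_pow_self
      _ ≤ 2 ^ (n + 1 + (j + 1)) := Nat.pow_le_pow_right (by norm_num) (by omega)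
    have hgm : g ∈ G (2 ^ (n + 1 + (j + 1))) := hsub hgj
    calc e (n + 1 + (j + 1)) = bestApproxError G (2 ^ (n + 1 + (j + 1))) f :=
          (hP f _ Nat.one_le_two_pow).2
      _ ≤ ‖f - g‖ := hE_le _ _ g hgm
      _ = dist f g := (dist_eq_norm f g).symm
      _ < ε := hg_dist
  -- conclusion of the telescoping: e (n+1) ^ θ ≤ D * T
  have hmain : e (n + 1) ^ θ ≤ D * T := by
    apply le_of_forall_pos_le_add
    intro ε hε
    obtain ⟨M, hM⟩ := hdense (ε ^ (1 / θ)) (Real.rpow_pos_of_pos hε _)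
    have h1 : e (n + 1 + M) ^ θ ≤ ε := by
      have h2 : e (n + 1 + M) ^ θ ≤ (ε ^ (1 / θ)) ^ θ :=
        Real.rpow_le_rpow (norm_nonneg _) hM.le hθ.le
      rwa [← Real.rpow_mul hε.le, one_div_mul_cancel hθ.ne', Real.rpow_one] at h2
    calc e (n + 1) ^ θ ≤ e (n + 1 + M) ^ θ + ∑ i ∈ Finset.range M, D * t (i + 1) := hTel M
      _ ≤ ε + D * T := add_le_add h1 (hPartial M)
      _ = D * T + ε := by ring
  -- hence e (n+1) ≤ D ^ (1/θ) * T ^ (1/θ)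
  have he_bound : e (n + 1) ≤ D ^ (1 / θ) * T ^ (1 / θ) := by
    have h1 : (e (n + 1) ^ θ) ^ (1 / θ) ≤ (D * T) ^ (1 / θ) :=
      Real.rpow_le_rpow (Real.rpow_nonneg (norm_nonneg _) _) hmain (by positivity)
    rwa [← Real.rpow_mul (norm_nonneg _), mul_one_div_cancel hθ.ne', Real.rpow_one,
      Real.mul_rpow hD_pos.le hT_nonneg] at h1
  -- the K-functional estimate by the realization competitor
  have hKle : KFunctional (Y : Set X) NY f ((2 : ℝ) ^ (-(n : ℝ) * α))
      ≤ e (n + 1) + (2 : ℝ) ^ (-(n : ℝ) * α) * NY (P (2 ^ (n + 1)) f) := by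
    apply csInf_le
    · refine ⟨0, ?_⟩
      rintro r ⟨g, -, rfl⟩
      have h0 := Real.rpow_pos_of_pos (two_pos : (0:ℝ) < 2) (-(n : ℝ) * α)
      exact add_nonneg (norm_nonneg _) (mul_nonneg h0.le (hNY_nonneg g))
    · exact ⟨P (2 ^ (n + 1)) f, hG_sub _ (hP f _ Nat.one_le_two_pow).1, rfl⟩
  -- the second term ≤ 2 ^ α * T ^ (1/θ)
  have hsecond : (2 : ℝ) ^ (-(n : ℝ) * α) * NY (P (2 ^ (n + 1)) f)
      ≤ (2 : ℝ) ^ α * T ^ (1 / θ) := by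
    have ht0 : t 0 = ((2 : ℝ) ^ (-((n + 1 : ℕ) : ℝ) * α) * NY (P (2 ^ (n + 1)) f)) ^ θ := by
      rw [ht_def]
    have hx_nonneg : 0 ≤ (2 : ℝ) ^ (-((n + 1 : ℕ) : ℝ) * α) * NY (P (2 ^ (n + 1)) f) :=
      mul_nonneg (Real.rpow_nonneg two_pos.le _) (hNY_nonneg _)
    have h1 : (2 : ℝ) ^ (-((n + 1 : ℕ) : ℝ) * α) * NY (P (2 ^ (n + 1)) f) = (t 0) ^ (1 / θ) := by
      rw [ht0, ← Real.rpow_mul hx_nonneg, mul_one_div_cancel hθ.ne', Real.rpow_one]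
    have h2 : t 0 ≤ T := hsum.le_tsum 0 fun i _ => ht_nonneg i
    have h3 : (t 0) ^ (1 / θ) ≤ T ^ (1 / θ) :=
      Real.rpow_le_rpow (ht_nonneg 0) h2 (by positivity)
    have hsplit : (2 : ℝ) ^ (-(n : ℝ) * α)
        = (2 : ℝ) ^ α * (2 : ℝ) ^ (-((n + 1 : ℕ) : ℝ) * α) := by
      rw [← Real.rpow_add two_pos]
      congr 1
      push_cast; ring
    calc (2 : ℝ) ^ (-(n : ℝ) * α) * NY (P (2 ^ (n + 1)) f)
        = (2 : ℝ) ^ α * ((2 : ℝ) ^ (-((n + 1 : ℕ) : ℝ) * α) * NY (P (2 ^ (n + 1)) f)) := by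
          rw [hsplit]; ring
      _ = (2 : ℝ) ^ α * (t 0) ^ (1 / θ) := by rw [h1]
      _ ≤ (2 : ℝ) ^ α * T ^ (1 / θ) :=
          mul_le_mul_of_nonneg_left h3 (Real.rpow_nonneg two_pos.le _)
  -- the full real inequality
  have hreal_main : KFunctional (Y : Set X) NY f ((2 : ℝ) ^ (-(n : ℝ) * α))
      ≤ (D ^ (1 / θ) + (2 : ℝ) ^ α) * T ^ (1 / θ) := by
    calc KFunctional (Y : Set X) NY f ((2 : ℝ) ^ (-(n : ℝ) * α))
        ≤ e (n + 1) + (2 : ℝ) ^ (-(n : ℝ) * α) * NY (P (2 ^ (n + 1)) f) := hKle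
      _ ≤ D ^ (1 / θ) * T ^ (1 / θ) + (2 : ℝ) ^ α * T ^ (1 / θ) := add_le_add he_bound hsecond
      _ = (D ^ (1 / θ) + (2 : ℝ) ^ α) * T ^ (1 / θ) := by ring
  -- pass to ENNReal
  rw [hS_eq, ENNReal.ofReal_rpow_of_nonneg hT_nonneg (by positivity : (0:ℝ) ≤ 1 / θ),
    ← ENNReal.ofReal_mul (by positivity)]
  exact ENNReal.ofReal_le_ofReal hreal_main
end

section
/- Suppose in addition that X is a Banach space, each G_n is convex, and X is τ-uniformly convex for some τ > 1 (i.e., there is c > 0 with δ_X(ε) ≥ cε^τ for all 0 ≤ ε ≤ 2). Then for every f ∈ X and n ∈ ℕ, (Σ_{k=n+1}^∞ 2^{-kατ}‖P_{2^k}(f)‖_Y^τ)^{1/τ} ≤ C·K(f, 2^{-nα}; X, Y), with C independent of f and n. -/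
open scoped ENNReal

/-- The modulus of convexity
`δ_X(ε) = inf{1 − ‖(x+y)/2‖ : ‖x‖ = ‖y‖ = 1, ‖x−y‖ = ε}`. -/
noncomputable def modulusConvexity (X : Type*) [SeminormedAddCommGroup X] [NormedSpace ℝ X]
    (ε : ℝ) : ℝ :=
  sInf {r : ℝ | ∃ x y : X, ‖x‖ = 1 ∧ ‖y‖ = 1 ∧ ‖x - y‖ = ε ∧ r = 1 - ‖(2 : ℝ)⁻¹ • (x + y)‖}

lemma modulusConvexity_bddBelow (X : Type*) [SeminormedAddCommGroup X] [NormedSpace ℝ X] :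
    ∀ r ∈ {r : ℝ | ∃ x y : X, ‖x‖ = 1 ∧ ‖y‖ = 1 ∧ ‖x - y‖ = ε ∧
      r = 1 - ‖(2 : ℝ)⁻¹ • (x + y)‖}, (0:ℝ) ≤ r := by
  rintro r ⟨x, y, hx, hy, -, rfl⟩
  have : ‖(2 : ℝ)⁻¹ • (x + y)‖ ≤ 1 := by
    rw [norm_smul]
    have := norm_add_le x y
    rw [hx, hy] at this
    simp only [norm_inv, Real.norm_ofNat]
    nlinarith
  linarith

lemma aux_ball {X : Type*} [SeminormedAddCommGroup X] [NormedSpace ℝ X]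
    {τ c : ℝ} (hτ : 1 < τ) (hc : 0 < c) (hc1 : c ≤ 1)
    (hconv : ∀ ε : ℝ, 0 ≤ ε → ε ≤ 2 → c * ε ^ τ ≤ modulusConvexity X ε)
    (u v : X) (hu : ‖u‖ ≤ 1) (hv : ‖v‖ ≤ 1) :
    c * 2 ^ (-τ) / 2 * ‖u - v‖ ^ τ ≤ 1 - ‖(2:ℝ)⁻¹ • (u + v)‖ := by
  have hτ0 : (0:ℝ) < τ := by linarith
  set β : ℝ := c * 2 ^ (-τ) / 2 with hβdef
  have h2τ : (0:ℝ) < (2:ℝ) ^ (-τ) := Real.rpow_pos_of_pos two_pos _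
  have hβ : 0 < β := by positivity
  set ε : ℝ := ‖u - v‖ with hεdef
  have hε0 : 0 ≤ ε := norm_nonneg _
  have hε2 : ε ≤ 2 := by
    have := norm_sub_le u v
    simp only [hεdef]; linarith
  set s : ℝ := 1 - (‖u‖ + ‖v‖) / 2 with hsdef
  have hs0 : 0 ≤ s := by
    have := norm_nonneg u; have := norm_nonneg v
    simp only [hsdef]; linarith
  have hmid : ‖(2:ℝ)⁻¹ • (u + v)‖ ≤ (‖u‖ + ‖v‖) / 2 := by
    rw [norm_smul]
    have := norm_add_le u v
    simp only [norm_inv, Real.norm_ofNat]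
    nlinarith
  clear_value β ε s
  by_cases hcase : β * ε ^ τ ≤ s
  · linarith
  push_neg at hcase
  -- case B
  have hεpos : 0 < ε := by
    rcases hε0.lt_or_eq with h | h
    · exact h
    · exfalso
      rw [← h, Real.zero_rpow (ne_of_gt hτ0)] at hcase
      simp at hcase
      linarith
  have hετ_le : ε ^ τ ≤ 2 ^ (τ - 1) * ε := by
    have hsplit := Real.rpow_add_one (ne_of_gt hεpos) (τ - 1)
    rw [sub_add_cancel] at hsplit
    rw [hsplit]
    have h1 : ε ^ (τ - 1) ≤ 2 ^ (τ - 1) :=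
      Real.rpow_le_rpow hε0 hε2 (by linarith)
    nlinarith [Real.rpow_nonneg hε0 (τ-1)]
  have h2βε : 2 * (β * ε ^ τ) ≤ c / 2 * ε := by
    have : 2 * β = c * 2 ^ (-τ) := by rw [hβdef]; ring
    have h2 : (2:ℝ) ^ (-τ) * (2:ℝ) ^ (τ - 1) = 2⁻¹ := by
      rw [← Real.rpow_add two_pos, show -τ + (τ - 1) = -1 by ring, Real.rpow_neg_one]
    have hkey : c * 2 ^ (-τ) * (2 ^ (τ - 1) * ε) = c / 2 * ε := by
      linear_combination (c * ε) * h2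
    calc 2 * (β * ε ^ τ) = c * 2 ^ (-τ) * ε ^ τ := by rw [hβdef]; ring
      _ ≤ c * 2 ^ (-τ) * (2 ^ (τ - 1) * ε) := by
          apply mul_le_mul_of_nonneg_left hετ_le (by positivity)
      _ = c / 2 * ε := hkey
  have h2s : 2 * s ≤ ε / 2 := by nlinarith
  have hupos : 0 < ‖u‖ := by
    have h1 : 1 - ‖u‖ ≤ 2 * s := by
      simp only [hsdef]; linarith
    nlinarith
  have hvpos : 0 < ‖v‖ := by
    have h1 : 1 - ‖v‖ ≤ 2 * s := by
      simp only [hsdef]; linarith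
    nlinarith
  set u' : X := ‖u‖⁻¹ • u with hu'def
  set v' : X := ‖v‖⁻¹ • v with hv'def
  have hu'1 : ‖u'‖ = 1 := by
    rw [hu'def, norm_smul, norm_inv, norm_norm, inv_mul_cancel₀ (ne_of_gt hupos)]
  have hv'1 : ‖v'‖ = 1 := by
    rw [hv'def, norm_smul, norm_inv, norm_norm, inv_mul_cancel₀ (ne_of_gt hvpos)]
  have huu' : ‖u - u'‖ = 1 - ‖u‖ := by
    have : u - u' = (1 - ‖u‖⁻¹) • u := by
      rw [hu'def, sub_smul, one_smul]
    rw [this, norm_smul, Real.norm_eq_abs]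
    have h1 : ‖u‖⁻¹ ≥ 1 := (one_le_inv₀ hupos).2 hu
    rw [abs_of_nonpos (by linarith)]
    field_simp
    ring
  have hvv' : ‖v - v'‖ = 1 - ‖v‖ := by
    have : v - v' = (1 - ‖v‖⁻¹) • v := by
      rw [hv'def, sub_smul, one_smul]
    rw [this, norm_smul, Real.norm_eq_abs]
    have h1 : ‖v‖⁻¹ ≥ 1 := (one_le_inv₀ hvpos).2 hv
    rw [abs_of_nonpos (by linarith)]
    field_simp
    ring
  clear_value u' v'
  set ε' : ℝ := ‖u' - v'‖ with hε'def
  have hε'2 : ε' ≤ 2 := by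
    have := norm_sub_le u' v'
    simp only [hε'def]; rw [hu'1, hv'1] at this; linarith
  have hε'lb : ε - 2 * s ≤ ε' := by
    have h1 : ‖u - v‖ ≤ ‖u - u'‖ + ‖u' - v'‖ + ‖v' - v‖ := by
      have := norm_sub_le_norm_sub_add_norm_sub u u' v
      have h2 := norm_sub_le_norm_sub_add_norm_sub u v' v
      calc ‖u - v‖ ≤ ‖u - v'‖ + ‖v' - v‖ := norm_sub_le_norm_sub_add_norm_sub _ _ _
        _ ≤ (‖u - u'‖ + ‖u' - v'‖) + ‖v' - v‖ := by
            have := norm_sub_le_norm_sub_add_norm_sub u u' v'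
            linarith
    rw [huu'] at h1
    have h3 : ‖v' - v‖ = 1 - ‖v‖ := by rw [norm_sub_rev]; exact hvv'
    rw [h3] at h1
    simp only [hsdef, hεdef] at *
    linarith
  have hδ : c * ε' ^ τ ≤ 1 - ‖(2:ℝ)⁻¹ • (u' + v')‖ := by
    refine le_trans (hconv ε' (norm_nonneg _) hε'2) ?_
    apply csInf_le
    · exact ⟨0, fun r hr => modulusConvexity_bddBelow X r hr⟩
    · exact ⟨u', v', hu'1, hv'1, rfl, rfl⟩
  have hmid' : ‖(2:ℝ)⁻¹ • (u + v)‖ ≤ ‖(2:ℝ)⁻¹ • (u' + v')‖ + s := by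
    have h1 : ‖(2:ℝ)⁻¹ • (u' + v') - (2:ℝ)⁻¹ • (u + v)‖ ≤ s := by
      have h2 : (2:ℝ)⁻¹ • (u' + v') - (2:ℝ)⁻¹ • (u + v) = (2:ℝ)⁻¹ • ((u' - u) + (v' - v)) := by
        rw [← smul_sub]; congr 1; abel
      rw [h2, norm_smul]
      have h3 : ‖(u' - u) + (v' - v)‖ ≤ (1 - ‖u‖) + (1 - ‖v‖) := by
        have := norm_add_le (u' - u) (v' - v)
        rw [norm_sub_rev u' u, norm_sub_rev v' v, huu', hvv'] at this
        linarith
      simp only [norm_inv, Real.norm_ofNat]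
      simp only [hsdef]
      nlinarith [norm_nonneg ((u' - u) + (v' - v))]
    have := norm_sub_norm_le ((2:ℝ)⁻¹ • (u + v)) ((2:ℝ)⁻¹ • (u' + v'))
    rw [norm_sub_rev ((2:ℝ)⁻¹ • (u + v))] at this
    linarith
  -- combine
  have hfinal : c * (ε/2) ^ τ ≤ c * ε' ^ τ := by
    apply mul_le_mul_of_nonneg_left _ hc.le
    apply Real.rpow_le_rpow (by positivity) (by linarith) hτ0.le
  have hhalf : c * (ε/2) ^ τ = 2 * (β * ε ^ τ) := by
    rw [Real.div_rpow hε0 (by norm_num : (0:ℝ) ≤ 2), hβdef, Real.rpow_neg (by norm_num : (0:ℝ) ≤ 2)]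
    simp only [div_eq_mul_inv]
    ring
  linarith

lemma aux_best {X : Type*} [NormedAddCommGroup X] [NormedSpace ℝ X]
    {τ c : ℝ} (hτ : 1 < τ) (hc : 0 < c) (hc1 : c ≤ 1)
    (hconv : ∀ ε : ℝ, 0 ≤ ε → ε ≤ 2 → c * ε ^ τ ≤ modulusConvexity X ε)
    {S : Set X} (hS : Convex ℝ S) (f p g : X) (hp : p ∈ S) (hg : g ∈ S)
    (hbest : ∀ h ∈ S, ‖f - p‖ ≤ ‖f - h‖) :
    c * 2 ^ (-τ) / 2 * ‖p - g‖ ^ τ ≤ ‖f - g‖ ^ (τ - 1) * (‖f - g‖ - ‖f - p‖) := by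
  have hτ0 : (0:ℝ) < τ := by linarith
  set R : ℝ := ‖f - g‖ with hRdef
  have hR0 : 0 ≤ R := norm_nonneg _
  have hfp : ‖f - p‖ ≤ R := hbest g hg
  rcases hR0.lt_or_eq with hR | hR
  · -- R > 0
    set u : X := R⁻¹ • (f - p) with hudef
    set v : X := R⁻¹ • (f - g) with hvdef
    have hRinv : 0 < R⁻¹ := inv_pos.2 hR
    have hu1 : ‖u‖ ≤ 1 := by
      rw [hudef, norm_smul, norm_inv, Real.norm_eq_abs, abs_of_pos hR]
      rw [inv_mul_le_iff₀ hR]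
      simpa using hfp
    have hv1 : ‖v‖ ≤ 1 := by
      rw [hvdef, norm_smul, norm_inv, Real.norm_eq_abs, abs_of_pos hR, ← hRdef,
        inv_mul_cancel₀ (ne_of_gt hR)]
    have key := aux_ball hτ hc hc1 hconv u v hu1 hv1
    have huv : ‖u - v‖ = R⁻¹ * ‖p - g‖ := by
      have : u - v = R⁻¹ • (g - p) := by
        rw [hudef, hvdef, ← smul_sub]
        congr 1; abel
      rw [this, norm_smul, norm_inv, Real.norm_eq_abs, abs_of_pos hR, norm_sub_rev]
    have hmidel : (2:ℝ)⁻¹ • (u + v) = R⁻¹ • (f - (2:ℝ)⁻¹ • (p + g)) := by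
      rw [hudef, hvdef, ← smul_add, smul_comm]
      congr 1
      rw [smul_add, smul_sub, smul_sub, smul_add]
      have h2 : ((2:ℝ)⁻¹ • f) + ((2:ℝ)⁻¹ • f) = f := by
        rw [← add_smul]; norm_num
      rw [sub_add_sub_comm, h2]
    have hmem : (2:ℝ)⁻¹ • (p + g) ∈ S := by
      have := hS hp hg (by norm_num : (0:ℝ) ≤ 1/2) (by norm_num : (0:ℝ) ≤ 1/2) (by norm_num)
      convert this using 1
      rw [smul_add]
      norm_num
    have hmidge : R⁻¹ * ‖f - p‖ ≤ ‖(2:ℝ)⁻¹ • (u + v)‖ := by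
      rw [hmidel, norm_smul, norm_inv, Real.norm_eq_abs, abs_of_pos hR]
      exact mul_le_mul_of_nonneg_left (hbest _ hmem) (le_of_lt hRinv)
    -- key : c * 2^(-τ)/2 * ‖u-v‖^τ ≤ 1 - ‖2⁻¹ • (u+v)‖
    rw [huv] at key
    have key2 : c * 2 ^ (-τ) / 2 * (R⁻¹ * ‖p - g‖) ^ τ ≤ 1 - R⁻¹ * ‖f - p‖ := by
      linarith
    have hmul : (R⁻¹ * ‖p - g‖) ^ τ = (R ^ τ)⁻¹ * ‖p - g‖ ^ τ := by
      rw [Real.mul_rpow (le_of_lt hRinv) (norm_nonneg _), Real.inv_rpow hR0]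
    have hRτpos : 0 < R ^ τ := Real.rpow_pos_of_pos hR τ
    have hA : R ^ τ = R ^ (τ - 1) * R := by
      have := Real.rpow_add_one (ne_of_gt hR) (τ - 1)
      rw [sub_add_cancel] at this
      exact this
    have hB : R ^ τ * R⁻¹ = R ^ (τ - 1) := by
      rw [hA, mul_assoc, mul_inv_cancel₀ (ne_of_gt hR), mul_one]
    have h := mul_le_mul_of_nonneg_left key2 hRτpos.le
    rw [hmul] at h
    have e1 : R ^ τ * (c * 2 ^ (-τ) / 2 * ((R ^ τ)⁻¹ * ‖p - g‖ ^ τ))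
        = c * 2 ^ (-τ) / 2 * ‖p - g‖ ^ τ := by
      rw [show R ^ τ * (c * 2 ^ (-τ) / 2 * ((R ^ τ)⁻¹ * ‖p - g‖ ^ τ))
          = (R ^ τ * (R ^ τ)⁻¹) * (c * 2 ^ (-τ) / 2 * ‖p - g‖ ^ τ) by ring,
        mul_inv_cancel₀ (ne_of_gt hRτpos), one_mul]
    have e2 : R ^ τ * (1 - R⁻¹ * ‖f - p‖) = R ^ (τ - 1) * (R - ‖f - p‖) := by
      rw [mul_sub, mul_one, ← mul_assoc, hB]
      rw [hA]; ring
    rw [e1, e2] at h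
    exact h
  · -- R = 0
    have hfg : f = g := by
      have : ‖f - g‖ = 0 := hR.symm
      rw [norm_eq_zero, sub_eq_zero] at this
      exact this
    have hfp0 : ‖f - p‖ = 0 := le_antisymm (by rw [hR]; exact hfp) (norm_nonneg _)
    have hpg : ‖p - g‖ = 0 := by
      refine le_antisymm ?_ (norm_nonneg _)
      calc ‖p - g‖ ≤ ‖p - f‖ + ‖f - g‖ := norm_sub_le_norm_sub_add_norm_sub _ _ _
        _ = 0 := by rw [norm_sub_rev, hfp0, ← hRdef, ← hR]; ring
    rw [hpg, hfp0, Real.zero_rpow (ne_of_gt hτ0), ← hR]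
    norm_num

lemma real_add_rpow_le_rpow_add {x y p : ℝ} (hx : 0 ≤ x) (hy : 0 ≤ y) (hp : 1 ≤ p) :
    x ^ p + y ^ p ≤ (x + y) ^ p := by
  have h := NNReal.add_rpow_le_rpow_add x.toNNReal y.toNNReal hp
  rw [← NNReal.coe_le_coe] at h
  push_cast at h
  rwa [Real.coe_toNNReal x hx, Real.coe_toNNReal y hy] at h

lemma ell_tau_bound {τ q B : ℝ} (hτ : 1 < τ) (hq0 : 0 < q) (hq1 : q < 1)
    (a b : ℕ → ℝ) (ha : ∀ i, 0 ≤ a i) (hb : ∀ i, 0 ≤ b i) (n : ℕ)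
    (hrec : ∀ i, a (i + 1) ≤ b i + q * a i)
    (hB : 0 ≤ B)
    (hSB : ∀ N : ℕ, ∑ i ∈ Finset.range N, b (n + i) ^ τ ≤ B ^ τ) :
    ∀ N : ℕ, (∑ i ∈ Finset.range N, a (n + 1 + i) ^ τ) ≤ ((B + a n) / (1 - q)) ^ τ := by
  intro N
  have hτ0 : (0:ℝ) < τ := by linarith
  have h1τ : (0:ℝ) < 1/τ := by positivity
  have hpowinv : ∀ x : ℝ, 0 ≤ x → (x ^ τ) ^ (1/τ) = x := fun x hx => by
    rw [← Real.rpow_mul hx, mul_one_div_cancel (ne_of_gt hτ0), Real.rpow_one]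
  have hpowinv' : ∀ x : ℝ, 0 ≤ x → (x ^ (1/τ)) ^ τ = x := fun x hx => by
    rw [← Real.rpow_mul hx, one_div_mul_cancel (ne_of_gt hτ0), Real.rpow_one]
  have hsum_nonneg : ∀ (M : ℕ) (f : ℕ → ℝ), (∀ i, 0 ≤ f i) →
      0 ≤ ∑ i ∈ Finset.range M, f i ^ τ := fun M f hf =>
    Finset.sum_nonneg fun i _ => Real.rpow_nonneg (hf i) τ
  set S : ℝ := ∑ i ∈ Finset.range N, a (n + 1 + i) ^ τ with hSdef
  have hS0 : 0 ≤ S := hsum_nonneg N (fun i => a (n + 1 + i)) (fun i => ha _)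
  set T : ℝ := S ^ (1/τ) with hTdef
  have hT0 : 0 ≤ T := Real.rpow_nonneg hS0 _
  have hTτ : T ^ τ = S := hpowinv' S hS0
  -- step 1: termwise recursion bound
  have step1 : S ≤ ∑ i ∈ Finset.range N, (b (n + i) + q * a (n + i)) ^ τ := by
    rw [hSdef]
    apply Finset.sum_le_sum
    intro i _
    apply Real.rpow_le_rpow (ha _) _ hτ0.le
    have hidx : n + 1 + i = (n + i) + 1 := by omega
    rw [hidx]
    exact hrec (n + i)
  -- step 2: Minkowski
  have step2 : (∑ i ∈ Finset.range N, (b (n + i) + q * a (n + i)) ^ τ) ^ (1/τ) ≤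
      (∑ i ∈ Finset.range N, b (n + i) ^ τ) ^ (1/τ) +
      (∑ i ∈ Finset.range N, (q * a (n + i)) ^ τ) ^ (1/τ) :=
    Real.Lp_add_le_of_nonneg (Finset.range N) hτ.le (fun i _ => hb _)
      (fun i _ => mul_nonneg hq0.le (ha _))
  -- step 3
  have step3 : (∑ i ∈ Finset.range N, b (n + i) ^ τ) ^ (1/τ) ≤ B := by
    rw [← hpowinv B hB]
    exact Real.rpow_le_rpow (hsum_nonneg N (fun i => b (n + i)) fun i => hb _)
      (hSB N) h1τ.le
  -- step 4
  have step4 : (∑ i ∈ Finset.range N, (q * a (n + i)) ^ τ) ^ (1/τ) =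
      q * (∑ i ∈ Finset.range N, a (n + i) ^ τ) ^ (1/τ) := by
    have h1 : ∀ i, (q * a (n + i)) ^ τ = q ^ τ * a (n + i) ^ τ := fun i =>
      Real.mul_rpow hq0.le (ha _)
    rw [Finset.sum_congr rfl (fun i _ => h1 i), ← Finset.mul_sum,
      Real.mul_rpow (Real.rpow_nonneg hq0.le τ)
        (hsum_nonneg N (fun i => a (n + i)) fun i => ha _),
      hpowinv q hq0.le]
  -- step 5
  have step5 : ∑ i ∈ Finset.range N, a (n + i) ^ τ ≤ a n ^ τ + S := by
    cases N with
    | zero => simp [hSdef, Real.rpow_nonneg (ha n) τ]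
    | succ M =>
      rw [Finset.sum_range_succ' (fun i => a (n + i) ^ τ) M]
      have hcongr : ∀ i, a (n + (i + 1)) ^ τ = a (n + 1 + i) ^ τ := fun i => by
        congr 2; omega
      rw [Finset.sum_congr rfl fun i _ => hcongr i]
      simp only [Nat.add_zero]
      have : ∑ i ∈ Finset.range M, a (n + 1 + i) ^ τ ≤ S := by
        rw [hSdef]
        apply Finset.sum_le_sum_of_subset_of_nonneg
          (Finset.range_subset_range.2 (Nat.le_succ M))
        intro i _ _; exact Real.rpow_nonneg (ha _) τ
      linarith
  -- step 6
  have step6 : (∑ i ∈ Finset.range N, a (n + i) ^ τ) ^ (1/τ) ≤ a n + T := by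
    calc (∑ i ∈ Finset.range N, a (n + i) ^ τ) ^ (1/τ)
        ≤ (a n ^ τ + T ^ τ) ^ (1/τ) := by
          apply Real.rpow_le_rpow (hsum_nonneg N (fun i => a (n + i)) fun i => ha _) _ h1τ.le
          rw [hTτ]; exact step5
      _ ≤ ((a n + T) ^ τ) ^ (1/τ) := by
          apply Real.rpow_le_rpow
            (add_nonneg (Real.rpow_nonneg (ha n) τ) (Real.rpow_nonneg hT0 τ)) _ h1τ.le
          exact real_add_rpow_le_rpow_add (ha n) hT0 hτ.le
      _ = a n + T := hpowinv _ (add_nonneg (ha n) hT0)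
  -- combine
  have hcomb : T ≤ B + q * (a n + T) := by
    calc T = S ^ (1/τ) := hTdef
      _ ≤ (∑ i ∈ Finset.range N, (b (n + i) + q * a (n + i)) ^ τ) ^ (1/τ) := by
          apply Real.rpow_le_rpow hS0 step1 h1τ.le
      _ ≤ (∑ i ∈ Finset.range N, b (n + i) ^ τ) ^ (1/τ) +
          (∑ i ∈ Finset.range N, (q * a (n + i)) ^ τ) ^ (1/τ) := step2
      _ ≤ B + q * (∑ i ∈ Finset.range N, a (n + i) ^ τ) ^ (1/τ) := by
          rw [step4] at *
          exact add_le_add step3 le_rfl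
      _ ≤ B + q * (a n + T) := by
          have := mul_le_mul_of_nonneg_left step6 hq0.le
          linarith
  have hfinal : T ≤ (B + a n) / (1 - q) := by
    rw [le_div_iff₀ (by linarith : (0:ℝ) < 1 - q)]
    have hqan : q * a n ≤ a n := by nlinarith [ha n]
    nlinarith
  calc S = T ^ τ := hTτ.symm
    _ ≤ ((B + a n) / (1 - q)) ^ τ := Real.rpow_le_rpow hT0 hfinal hτ0.le

/-- Theorem (A). If `X` is a Banach space which is `τ`-uniformly convex,
each `G_n` is convex, and the Jackson, Bernstein and realization assumptions hold, then
`(∑_{k=n+1}^∞ 2^{-kατ} ‖P_{2^k}(f)‖_Y^τ)^{1/τ} ≲ K(f, 2^{-nα}; X, Y)`. -/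
theorem stmt6 {X : Type*} [NormedAddCommGroup X] [NormedSpace ℝ X] [CompleteSpace X]
    (Y : Submodule ℝ X) (NY : X → ℝ)
    (hNY_nonneg : ∀ g : X, 0 ≤ NY g)
    (hNY_add : ∀ g h : X, g ∈ Y → h ∈ Y → NY (g + h) ≤ NY g + NY h)
    (hNY_smul : ∀ (c : ℝ) (g : X), g ∈ Y → NY (c • g) = |c| * NY g)
    (G : ℕ → Set X)
    (hG_zero : (0 : X) ∈ G 1)
    (hG_mono : ∀ n : ℕ, G n ⊆ G (n + 1))
    (hG_neg : ∀ (n : ℕ) (g : X), g ∈ G n → -g ∈ G n)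
    (hG_sub : ∀ n : ℕ, G n ⊆ (Y : Set X))
    (hG_dense : Dense (⋃ n : ℕ, G (n + 1)))
    (α : ℝ) (hα : 0 < α)
    (c₁ c₂ : ℝ) (hc₁ : 0 < c₁) (hc₂ : 0 < c₂)
    (jackson : ∀ f ∈ Y, ∀ n : ℕ, 1 ≤ n →
      bestApproxError G n f ≤ c₁ * (n : ℝ) ^ (-α) * NY f)
    (bernstein : ∀ n : ℕ, 1 ≤ n → ∀ g₁ ∈ G n, ∀ g₂ ∈ G n,
      NY (g₁ - g₂) ≤ c₂ * (n : ℝ) ^ α * ‖g₁ - g₂‖)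
    (C₀ : ℝ) (hC₀ : 0 < C₀)
    (hreal : ∀ (f : X) (n : ℕ), 1 ≤ n →
      realization G NY α n f ≤ C₀ * KFunctional (Y : Set X) NY f ((n : ℝ) ^ (-α)))
    (P : ℕ → X → X)
    (hP : ∀ (f : X) (n : ℕ), 1 ≤ n → P n f ∈ G n ∧ ‖f - P n f‖ = bestApproxError G n f)
    (hG_conv : ∀ n : ℕ, Convex ℝ (G n))
    (τ : ℝ) (hτ : 1 < τ)
    (cX : ℝ) (hcX : 0 < cX)
    (hconv : ∀ ε : ℝ, 0 ≤ ε → ε ≤ 2 → cX * ε ^ τ ≤ modulusConvexity X ε) :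
    ∃ C : ℝ, 0 < C ∧ ∀ (f : X) (n : ℕ), 1 ≤ n →
      (∑' k : ℕ,
          ENNReal.ofReal
            (((2 : ℝ) ^ (-((n + 1 + k : ℕ) : ℝ) * α) * NY (P (2 ^ (n + 1 + k)) f)) ^ τ)) ^
          (1 / τ)
        ≤ ENNReal.ofReal
            (C * KFunctional (Y : Set X) NY f ((2 : ℝ) ^ (-(n : ℝ) * α))) := by
  have hτ0 : (0:ℝ) < τ := by linarith
  have h1τ : (0:ℝ) < 1/τ := by positivity
  have hpowinv : ∀ x : ℝ, 0 ≤ x → (x ^ τ) ^ (1/τ) = x := fun x hx => by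
    rw [← Real.rpow_mul hx, mul_one_div_cancel (ne_of_gt hτ0), Real.rpow_one]
  have hpowinv' : ∀ x : ℝ, 0 ≤ x → (x ^ (1/τ)) ^ τ = x := fun x hx => by
    rw [← Real.rpow_mul hx, one_div_mul_cancel (ne_of_gt hτ0), Real.rpow_one]
  set c : ℝ := min cX 1 with hcdef
  have hc : 0 < c := lt_min hcX one_pos
  have hc1 : c ≤ 1 := min_le_right _ _
  have hccX : c ≤ cX := min_le_left _ _
  clear_value c
  have hconv' : ∀ ε : ℝ, 0 ≤ ε → ε ≤ 2 → c * ε ^ τ ≤ modulusConvexity X ε := by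
    intro ε h1 h2
    exact le_trans (mul_le_mul_of_nonneg_right hccX (Real.rpow_nonneg h1 τ)) (hconv ε h1 h2)
  set β : ℝ := c * 2 ^ (-τ) / 2 with hβdef
  have h2τpos : (0:ℝ) < (2:ℝ) ^ (-τ) := Real.rpow_pos_of_pos two_pos _
  have hβ : 0 < β := by rw [hβdef]; positivity
  clear_value β
  set q : ℝ := (2:ℝ) ^ (-α) with hqdef
  have hq0 : 0 < q := by rw [hqdef]; exact Real.rpow_pos_of_pos two_pos _
  have hq1 : q < 1 := by
    rw [hqdef]
    have := Real.rpow_lt_rpow_of_exponent_lt (by norm_num : (1:ℝ) < 2) (by linarith : -α < 0)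
    rwa [Real.rpow_zero] at this
  set Dβ : ℝ := (β⁻¹) ^ (1/τ) with hDβdef
  have hDβ : 0 < Dβ := Real.rpow_pos_of_pos (inv_pos.2 hβ) _
  clear_value Dβ
  set C₁ : ℝ := (c₂ * Dβ + (2 * c₂ + 1)) / (1 - q) with hC₁def
  have hC₁ : 0 < C₁ := by
    rw [hC₁def]
    apply div_pos (by nlinarith) (by linarith)
  clear_value C₁
  clear_value q
  refine ⟨C₀ * C₁, mul_pos hC₀ hC₁, ?_⟩
  intro f n hn
  -- power identities
  have hq_pow : ∀ m : ℕ, (2:ℝ) ^ (-(m:ℝ) * α) = q ^ m := by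
    intro m
    rw [hqdef, ← Real.rpow_natCast ((2:ℝ) ^ (-α)) m,
      ← Real.rpow_mul (by norm_num : (0:ℝ) ≤ 2)]
    congr 1; ring
  have hpow_cast : ∀ m : ℕ, ((2 ^ m : ℕ) : ℝ) ^ α = (2:ℝ) ^ ((m:ℝ) * α) := by
    intro m
    rw [show ((2 ^ m : ℕ) : ℝ) = (2:ℝ) ^ (m:ℕ) by push_cast; ring,
      ← Real.rpow_natCast (2:ℝ) m, ← Real.rpow_mul (by norm_num : (0:ℝ) ≤ 2)]
  have hpow_cast' : ∀ m : ℕ, ((2 ^ m : ℕ) : ℝ) ^ (-α) = q ^ m := by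
    intro m
    rw [show ((2 ^ m : ℕ) : ℝ) = (2:ℝ) ^ (m:ℕ) by push_cast; ring,
      ← Real.rpow_natCast (2:ℝ) m, ← Real.rpow_mul (by norm_num : (0:ℝ) ≤ 2), ← hq_pow m]
    congr 1; ring
  have hcancel : ∀ m : ℕ, q ^ m * ((2 ^ m : ℕ) : ℝ) ^ α = 1 := by
    intro m
    rw [hpow_cast m, ← hq_pow m, ← Real.rpow_add two_pos,
      show -(m:ℝ) * α + (m:ℝ) * α = 0 by ring, Real.rpow_zero]
  -- basic structure
  have hpow1 : ∀ m : ℕ, 1 ≤ 2 ^ m := fun m => Nat.one_le_two_pow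
  have hGm : Monotone G := monotone_nat_of_le_succ hG_mono
  obtain ⟨p, hpdef⟩ : ∃ p : ℕ → X, ∀ m, p m = P (2 ^ m) f := ⟨_, fun _ => rfl⟩
  have hpmem : ∀ m, p m ∈ G (2 ^ m) := fun m => by
    rw [hpdef m]; exact (hP f (2 ^ m) (hpow1 m)).1
  have hpmem' : ∀ m, p m ∈ G (2 ^ (m + 1)) := fun m =>
    hGm (Nat.pow_le_pow_right (by norm_num) (Nat.le_succ m)) (hpmem m)
  have hpY : ∀ m, p m ∈ Y := fun m => hG_sub _ (hpmem m)
  obtain ⟨E, hEdef⟩ : ∃ E : ℕ → ℝ, ∀ m, E m = ‖f - p m‖ := ⟨_, fun _ => rfl⟩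
  have hE0 : ∀ m, 0 ≤ E m := fun m => (hEdef m) ▸ norm_nonneg _
  have hbestm : ∀ m, ∀ h ∈ G (2 ^ m), E m ≤ ‖f - h‖ := by
    intro m h hh
    rw [hEdef m, hpdef m, (hP f (2 ^ m) (hpow1 m)).2]
    exact csInf_le ⟨0, by rintro r ⟨g', hg', rfl⟩; exact norm_nonneg _⟩ ⟨h, hh, rfl⟩
  have hEdec : ∀ m, E (m + 1) ≤ E m := fun m => by
    rw [hEdef m]; exact hbestm (m + 1) (p m) (hpmem' m)
  have hEanti : Antitone E := antitone_nat_of_succ_le hEdec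
  -- key convexity inequality
  have hkey : ∀ m, β * ‖p (m + 1) - p m‖ ^ τ ≤ E m ^ (τ - 1) * (E m - E (m + 1)) := by
    intro m
    rw [hEdef m, hEdef (m + 1), hβdef]
    exact aux_best hτ hc hc1 hconv' (hG_conv (2 ^ (m + 1))) f (p (m + 1)) (p m)
      (hpmem (m + 1)) (hpmem' m) (fun h hh => by
        rw [← hEdef (m + 1)]; exact hbestm (m + 1) h hh)
  have hΔτ : ∀ m, ‖p (m + 1) - p m‖ ^ τ ≤ β⁻¹ * (E m ^ (τ - 1) * (E m - E (m + 1))) := by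
    intro m
    have h := hkey m
    calc ‖p (m + 1) - p m‖ ^ τ = β⁻¹ * (β * ‖p (m + 1) - p m‖ ^ τ) := by
          field_simp
      _ ≤ β⁻¹ * (E m ^ (τ - 1) * (E m - E (m + 1))) :=
          mul_le_mul_of_nonneg_left h (inv_nonneg.2 hβ.le)
  have hEsplit : ∀ x : ℝ, 0 ≤ x → x ^ (τ - 1) * x = x ^ τ := by
    intro x hx
    rcases hx.lt_or_eq with h | h
    · have h2 := Real.rpow_add_one (ne_of_gt h) (τ - 1)
      rw [sub_add_cancel] at h2
      rw [h2]
    · rw [← h, mul_zero, Real.zero_rpow (ne_of_gt hτ0)]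
  -- b sequence
  obtain ⟨b, hbdef⟩ : ∃ b : ℕ → ℝ, ∀ m, b m = q ^ (m + 1) * NY (p (m + 1) - p m) :=
    ⟨_, fun _ => rfl⟩
  have hb0 : ∀ m, 0 ≤ b m := fun m =>
    (hbdef m) ▸ mul_nonneg (pow_nonneg hq0.le _) (hNY_nonneg _)
  have hb_le : ∀ m, b m ≤ c₂ * ‖p (m + 1) - p m‖ := by
    intro m
    have hbern := bernstein (2 ^ (m + 1)) (hpow1 (m + 1)) (p (m + 1)) (hpmem (m + 1))
      (p m) (hpmem' m)
    rw [hbdef m]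
    calc q ^ (m + 1) * NY (p (m + 1) - p m)
          ≤ q ^ (m + 1) * (c₂ * ((2 ^ (m + 1) : ℕ) : ℝ) ^ α * ‖p (m + 1) - p m‖) :=
          mul_le_mul_of_nonneg_left hbern (pow_nonneg hq0.le _)
      _ = c₂ * ‖p (m + 1) - p m‖ * (q ^ (m + 1) * ((2 ^ (m + 1) : ℕ) : ℝ) ^ α) := by ring
      _ = c₂ * ‖p (m + 1) - p m‖ := by rw [hcancel]; ring
  -- telescoping
  have htel : ∀ N : ℕ, ∑ i ∈ Finset.range N,
      E (n + i) ^ (τ - 1) * (E (n + i) - E (n + i + 1)) ≤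
      E n ^ (τ - 1) * (E n - E (n + N)) := by
    intro N
    induction N with
    | zero => simp
    | succ M ih =>
      rw [Finset.sum_range_succ]
      have h1 : E (n + M) ^ (τ - 1) * (E (n + M) - E (n + M + 1)) ≤
          E n ^ (τ - 1) * (E (n + M) - E (n + M + 1)) := by
        apply mul_le_mul_of_nonneg_right _ (by have := hEdec (n + M); linarith)
        exact Real.rpow_le_rpow (hE0 _) (hEanti (Nat.le_add_right n M)) (by linarith)
      have hidx : n + M + 1 = n + (M + 1) := by omega
      calc ∑ i ∈ Finset.range M, E (n + i) ^ (τ - 1) * (E (n + i) - E (n + i + 1)) +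
            E (n + M) ^ (τ - 1) * (E (n + M) - E (n + M + 1))
          ≤ E n ^ (τ - 1) * (E n - E (n + M)) +
            E n ^ (τ - 1) * (E (n + M) - E (n + M + 1)) := add_le_add ih h1
        _ = E n ^ (τ - 1) * (E n - E (n + (M + 1))) := by rw [← hidx]; ring
  have hsumb : ∀ N : ℕ, ∑ i ∈ Finset.range N, b (n + i) ^ τ ≤ (c₂ * Dβ * E n) ^ τ := by
    intro N
    have h1 : ∀ i : ℕ, b (n + i) ^ τ ≤
        c₂ ^ τ * β⁻¹ * (E (n + i) ^ (τ - 1) * (E (n + i) - E (n + i + 1))) := by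
      intro i
      calc b (n + i) ^ τ ≤ (c₂ * ‖p (n + i + 1) - p (n + i)‖) ^ τ :=
            Real.rpow_le_rpow (hb0 _) (hb_le _) hτ0.le
        _ = c₂ ^ τ * ‖p (n + i + 1) - p (n + i)‖ ^ τ := Real.mul_rpow hc₂.le (norm_nonneg _)
        _ ≤ c₂ ^ τ * (β⁻¹ * (E (n + i) ^ (τ - 1) * (E (n + i) - E (n + i + 1)))) :=
            mul_le_mul_of_nonneg_left (hΔτ (n + i)) (Real.rpow_nonneg hc₂.le τ)
        _ = c₂ ^ τ * β⁻¹ * (E (n + i) ^ (τ - 1) * (E (n + i) - E (n + i + 1))) := by ring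
    calc ∑ i ∈ Finset.range N, b (n + i) ^ τ
        ≤ ∑ i ∈ Finset.range N,
            c₂ ^ τ * β⁻¹ * (E (n + i) ^ (τ - 1) * (E (n + i) - E (n + i + 1))) :=
          Finset.sum_le_sum fun i _ => h1 i
      _ = c₂ ^ τ * β⁻¹ * ∑ i ∈ Finset.range N,
            E (n + i) ^ (τ - 1) * (E (n + i) - E (n + i + 1)) := by
          rw [Finset.mul_sum]
      _ ≤ c₂ ^ τ * β⁻¹ * (E n ^ (τ - 1) * (E n - E (n + N))) := by
          apply mul_le_mul_of_nonneg_left (htel N)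
          exact mul_nonneg (Real.rpow_nonneg hc₂.le τ) (inv_nonneg.2 hβ.le)
      _ ≤ c₂ ^ τ * β⁻¹ * E n ^ τ := by
          apply mul_le_mul_of_nonneg_left _
            (mul_nonneg (Real.rpow_nonneg hc₂.le τ) (inv_nonneg.2 hβ.le))
          rw [← hEsplit (E n) (hE0 n)]
          apply mul_le_mul_of_nonneg_left _ (Real.rpow_nonneg (hE0 n) _)
          have := hE0 (n + N); linarith
      _ = (c₂ * Dβ * E n) ^ τ := by
          rw [Real.mul_rpow (mul_nonneg hc₂.le hDβ.le) (hE0 n),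
            Real.mul_rpow hc₂.le hDβ.le, hDβdef,
            ← Real.rpow_mul (inv_nonneg.2 hβ.le), one_div_mul_cancel (ne_of_gt hτ0),
            Real.rpow_one]
  -- a sequence and recursion
  obtain ⟨a, hadef⟩ : ∃ a : ℕ → ℝ, ∀ m, a m = q ^ m * NY (p m) := ⟨_, fun _ => rfl⟩
  have ha0 : ∀ m, 0 ≤ a m := fun m =>
    (hadef m) ▸ mul_nonneg (pow_nonneg hq0.le _) (hNY_nonneg _)
  have harec : ∀ m, a (m + 1) ≤ b m + q * a m := by
    intro m
    have hsub : NY (p (m + 1)) ≤ NY (p (m + 1) - p m) + NY (p m) := by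
      have h := hNY_add (p (m + 1) - p m) (p m)
        (Submodule.sub_mem Y (hpY (m + 1)) (hpY m)) (hpY m)
      rwa [sub_add_cancel] at h
    calc a (m + 1) = q ^ (m + 1) * NY (p (m + 1)) := hadef (m + 1)
      _ ≤ q ^ (m + 1) * (NY (p (m + 1) - p m) + NY (p m)) :=
          mul_le_mul_of_nonneg_left hsub (pow_nonneg hq0.le _)
      _ = b m + q * a m := by
          rw [hbdef m, hadef m, pow_succ]
          ring
  -- master bound for each g
  have hmaster : ∀ g ∈ G (2 ^ n), ∀ N : ℕ,
      ∑ i ∈ Finset.range N, a (n + 1 + i) ^ τ ≤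
      (C₁ * (‖f - g‖ + ((2 ^ n : ℕ) : ℝ) ^ (-α) * NY g)) ^ τ := by
    intro g hg N
    have hgY : g ∈ Y := hG_sub _ hg
    set V : ℝ := ‖f - g‖ + ((2 ^ n : ℕ) : ℝ) ^ (-α) * NY g with hVdef
    have hsnd : 0 ≤ ((2 ^ n : ℕ) : ℝ) ^ (-α) * NY g :=
      mul_nonneg (Real.rpow_nonneg (Nat.cast_nonneg _) _) (hNY_nonneg g)
    have hV0 : 0 ≤ V := add_nonneg (norm_nonneg _) hsnd
    have hEnV : E n ≤ ‖f - g‖ := hbestm n g hg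
    have hanV : a n ≤ (2 * c₂ + 1) * V := by
      have hsub : NY (p n) ≤ NY (p n - g) + NY g := by
        have h := hNY_add (p n - g) g (Submodule.sub_mem Y (hpY n) hgY) hgY
        rwa [sub_add_cancel] at h
      have hbern := bernstein (2 ^ n) (hpow1 n) (p n) (hpmem n) g hg
      have hng : ‖p n - g‖ ≤ 2 * ‖f - g‖ := by
        have h1 : ‖p n - g‖ ≤ ‖p n - f‖ + ‖f - g‖ := norm_sub_le_norm_sub_add_norm_sub _ _ _
        have h2 : ‖p n - f‖ = E n := by rw [hEdef n]; exact norm_sub_rev _ _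
        linarith
      have hq_n : 0 ≤ q ^ n := pow_nonneg hq0.le n
      have h3 : a n ≤ q ^ n * (NY (p n - g) + NY g) := by
        rw [hadef n]
        exact mul_le_mul_of_nonneg_left hsub hq_n
      have h4 : NY (p n - g) ≤ c₂ * ((2 ^ n : ℕ) : ℝ) ^ α * (2 * ‖f - g‖) := by
        calc NY (p n - g) ≤ c₂ * ((2 ^ n : ℕ) : ℝ) ^ α * ‖p n - g‖ := hbern
          _ ≤ c₂ * ((2 ^ n : ℕ) : ℝ) ^ α * (2 * ‖f - g‖) := by
              apply mul_le_mul_of_nonneg_left hng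
              have := hpow_cast n
              positivity
      have h5 : q ^ n * (c₂ * ((2 ^ n : ℕ) : ℝ) ^ α * (2 * ‖f - g‖)) = 2 * c₂ * ‖f - g‖ := by
        have := hcancel n
        calc q ^ n * (c₂ * ((2 ^ n : ℕ) : ℝ) ^ α * (2 * ‖f - g‖))
            = 2 * c₂ * ‖f - g‖ * (q ^ n * ((2 ^ n : ℕ) : ℝ) ^ α) := by ring
          _ = 2 * c₂ * ‖f - g‖ := by rw [this]; ring
      have h6 : q ^ n * NY g = ((2 ^ n : ℕ) : ℝ) ^ (-α) * NY g := by rw [hpow_cast' n]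
      have h7 : a n ≤ 2 * c₂ * ‖f - g‖ + ((2 ^ n : ℕ) : ℝ) ^ (-α) * NY g := by
        calc a n ≤ q ^ n * (NY (p n - g) + NY g) := h3
          _ = q ^ n * NY (p n - g) + q ^ n * NY g := by ring
          _ ≤ q ^ n * (c₂ * ((2 ^ n : ℕ) : ℝ) ^ α * (2 * ‖f - g‖)) + q ^ n * NY g := by
              have := mul_le_mul_of_nonneg_left h4 hq_n
              linarith
          _ = 2 * c₂ * ‖f - g‖ + ((2 ^ n : ℕ) : ℝ) ^ (-α) * NY g := by rw [h5, h6]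
      have hfg0 : 0 ≤ ‖f - g‖ := norm_nonneg _
      rw [hVdef]
      nlinarith
    have hB0 : 0 ≤ c₂ * Dβ * E n := mul_nonneg (mul_nonneg hc₂.le hDβ.le) (hE0 n)
    have hell := ell_tau_bound hτ hq0 hq1 a b ha0 hb0 n harec hB0 hsumb N
    apply le_trans hell
    apply Real.rpow_le_rpow (div_nonneg (add_nonneg hB0 (ha0 n)) (by linarith)) _ hτ0.le
    rw [hC₁def, div_mul_eq_mul_div]
    apply div_le_div_of_nonneg_right _ (by linarith : (0:ℝ) ≤ 1 - q)
    have hEn : c₂ * Dβ * E n ≤ c₂ * Dβ * V := by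
      apply mul_le_mul_of_nonneg_left _ (mul_nonneg hc₂.le hDβ.le)
      rw [hVdef]; linarith
    nlinarith
  -- K-functional
  have hK0 : 0 ≤ KFunctional (Y : Set X) NY f ((2:ℝ) ^ (-(n:ℝ) * α)) := by
    apply Real.sInf_nonneg
    rintro x ⟨g, hgY, rfl⟩
    have : (0:ℝ) ≤ (2:ℝ) ^ (-(n:ℝ) * α) := Real.rpow_nonneg (by norm_num) _
    have := hNY_nonneg g
    positivity
  set Kf : ℝ := KFunctional (Y : Set X) NY f ((2:ℝ) ^ (-(n:ℝ) * α)) with hKdef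
  have hreal_le : realization G NY α (2 ^ n) f ≤ C₀ * Kf := by
    have h := hreal f (2 ^ n) (hpow1 n)
    have harg : KFunctional (Y : Set X) NY f (((2 ^ n : ℕ) : ℝ) ^ (-α)) = Kf := by
      rw [hKdef]
      congr 1
      rw [hpow_cast' n, hq_pow n]
    rwa [harg] at h
  -- final real bound
  have hL : ∀ N : ℕ, ∑ i ∈ Finset.range N, a (n + 1 + i) ^ τ ≤ (C₀ * C₁ * Kf) ^ τ := by
    intro N
    set L : ℝ := ∑ i ∈ Finset.range N, a (n + 1 + i) ^ τ with hLdef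
    have hL0 : 0 ≤ L := Finset.sum_nonneg fun i _ => Real.rpow_nonneg (ha0 _) τ
    have h1 : L ^ (1/τ) / C₁ ≤ realization G NY α (2 ^ n) f := by
      apply le_csInf
      · exact ⟨‖f - 0‖ + ((2 ^ n : ℕ) : ℝ) ^ (-α) * NY 0, 0, hGm (hpow1 n) hG_zero, rfl⟩
      · rintro r ⟨g, hg, rfl⟩
        rw [div_le_iff₀ hC₁]
        have h2 := hmaster g hg N
        have hV0 : 0 ≤ ‖f - g‖ + ((2 ^ n : ℕ) : ℝ) ^ (-α) * NY g :=
          add_nonneg (norm_nonneg _)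
            (mul_nonneg (Real.rpow_nonneg (Nat.cast_nonneg _) _) (hNY_nonneg g))
        calc L ^ (1/τ)
            ≤ ((C₁ * (‖f - g‖ + ((2 ^ n : ℕ) : ℝ) ^ (-α) * NY g)) ^ τ) ^ (1/τ) :=
              Real.rpow_le_rpow hL0 h2 h1τ.le
          _ = C₁ * (‖f - g‖ + ((2 ^ n : ℕ) : ℝ) ^ (-α) * NY g) :=
              hpowinv _ (mul_nonneg hC₁.le hV0)
          _ = (‖f - g‖ + ((2 ^ n : ℕ) : ℝ) ^ (-α) * NY g) * C₁ := by ring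
    have h4 : L ^ (1/τ) ≤ C₀ * C₁ * Kf := by
      rw [div_le_iff₀ hC₁] at h1
      calc L ^ (1/τ) ≤ realization G NY α (2 ^ n) f * C₁ := h1
        _ ≤ (C₀ * Kf) * C₁ := mul_le_mul_of_nonneg_right hreal_le hC₁.le
        _ = C₀ * C₁ * Kf := by ring
    calc L = (L ^ (1/τ)) ^ τ := (hpowinv' L hL0).symm
      _ ≤ (C₀ * C₁ * Kf) ^ τ :=
          Real.rpow_le_rpow (Real.rpow_nonneg hL0 _) h4 hτ0.le
  -- ENNReal wrap-up
  have hterm : ∀ k : ℕ,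
      (2:ℝ) ^ (-((n + 1 + k : ℕ) : ℝ) * α) * NY (P (2 ^ (n + 1 + k)) f) = a (n + 1 + k) := by
    intro k
    rw [hadef (n + 1 + k), hq_pow (n + 1 + k), hpdef (n + 1 + k)]
  have hCK0 : 0 ≤ C₀ * C₁ * Kf := mul_nonneg (mul_nonneg hC₀.le hC₁.le) hK0
  have htsum : (∑' k : ℕ, ENNReal.ofReal
      (((2:ℝ) ^ (-((n + 1 + k : ℕ) : ℝ) * α) * NY (P (2 ^ (n + 1 + k)) f)) ^ τ)) ≤
      ENNReal.ofReal ((C₀ * C₁ * Kf) ^ τ) := by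
    apply tsum_le_of_sum_le' zero_le
    intro s
    obtain ⟨N, hsN⟩ := Finset.exists_nat_subset_range s
    calc ∑ k ∈ s, ENNReal.ofReal
          (((2:ℝ) ^ (-((n + 1 + k : ℕ) : ℝ) * α) * NY (P (2 ^ (n + 1 + k)) f)) ^ τ)
        ≤ ∑ k ∈ Finset.range N, ENNReal.ofReal
          (((2:ℝ) ^ (-((n + 1 + k : ℕ) : ℝ) * α) * NY (P (2 ^ (n + 1 + k)) f)) ^ τ) :=
          Finset.sum_le_sum_of_subset hsN
      _ = ENNReal.ofReal (∑ k ∈ Finset.range N,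
          ((2:ℝ) ^ (-((n + 1 + k : ℕ) : ℝ) * α) * NY (P (2 ^ (n + 1 + k)) f)) ^ τ) :=
          (ENNReal.ofReal_sum_of_nonneg fun i _ => Real.rpow_nonneg
            (by rw [hterm i]; exact ha0 _) τ).symm
      _ ≤ ENNReal.ofReal ((C₀ * C₁ * Kf) ^ τ) := by
          apply ENNReal.ofReal_le_ofReal
          calc ∑ k ∈ Finset.range N,
              ((2:ℝ) ^ (-((n + 1 + k : ℕ) : ℝ) * α) * NY (P (2 ^ (n + 1 + k)) f)) ^ τ
              = ∑ k ∈ Finset.range N, a (n + 1 + k) ^ τ :=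
                Finset.sum_congr rfl fun k _ => by rw [hterm k]
            _ ≤ (C₀ * C₁ * Kf) ^ τ := hL N
  calc (∑' k : ℕ, ENNReal.ofReal
        (((2:ℝ) ^ (-((n + 1 + k : ℕ) : ℝ) * α) * NY (P (2 ^ (n + 1 + k)) f)) ^ τ)) ^ (1/τ)
      ≤ (ENNReal.ofReal ((C₀ * C₁ * Kf) ^ τ)) ^ (1/τ) := ENNReal.rpow_le_rpow htsum h1τ.le
    _ = ENNReal.ofReal (((C₀ * C₁ * Kf) ^ τ) ^ (1/τ)) :=
        ENNReal.ofReal_rpow_of_nonneg (Real.rpow_nonneg hCK0 τ) h1τ.le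
    _ = ENNReal.ofReal (C₀ * C₁ * Kf) := by rw [hpowinv _ hCK0]
end
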